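/- arXiv:1303.3902 — 4 statements merged into one kernel-verified Lean document; each statement's English description precedes it below -/
import Mathlib

section
/- Let $\alpha$ be irrational and let $n, h$ be positive integers such that the fractional parts $\{n\alpha\}$ and $\{(n+h)\alpha\}$ both lie in an interval $I \subset (0,1)$ of length at most $1/2$. If $\{h\alpha\} < 1/2$ then $\lfloor(n+h)\alpha\rfloor - \lfloor n\alpha\rfloor = \lfloor h\alpha\rfloor$, and if $\{h\alpha\} > 1/2$ then $\lfloor(n+h)\alpha\rfloor - \lfloor n\alpha\rfloor = \lfloor h\alpha\rfloor + 1$. -/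
/-- If `α` is irrational, `{nα}` and `{(n+h)α}` lie in an interval `I ⊆ (0,1)`
of length at most `1/2`, then `⌊(n+h)α⌋ - ⌊nα⌋` equals `⌊hα⌋` when `{hα} < 1/2`
and equals `⌊hα⌋ + 1` when `{hα} > 1/2`. -/
theorem floor_diff_of_fract_mem_short_interval
    {α : ℝ} (hα : Irrational α) (n h : ℕ) (hn : 0 < n) (hh : 0 < h)
    (a b : ℝ) (ha : 0 ≤ a) (hb : b ≤ 1) (hlen : b - a ≤ 1/2)
    (h1 : Int.fract ((n : ℝ) * α) ∈ Set.Ioo a b)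
    (h2 : Int.fract (((n : ℝ) + (h : ℝ)) * α) ∈ Set.Ioo a b) :
    (Int.fract ((h : ℝ) * α) < 1/2 →
      ⌊((n : ℝ) + (h : ℝ)) * α⌋ - ⌊(n : ℝ) * α⌋ = ⌊(h : ℝ) * α⌋) ∧
    (Int.fract ((h : ℝ) * α) > 1/2 →
      ⌊((n : ℝ) + (h : ℝ)) * α⌋ - ⌊(n : ℝ) * α⌋ = ⌊(h : ℝ) * α⌋ + 1) := by
  obtain ⟨ha1, hb1⟩ := h1
  obtain ⟨ha2, hb2⟩ := h2
  set D : ℤ := ⌊((n : ℝ) + (h : ℝ)) * α⌋ - ⌊(n : ℝ) * α⌋ - ⌊(h : ℝ) * α⌋ with hD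
  have key : (D : ℝ) = Int.fract ((n : ℝ) * α) + Int.fract ((h : ℝ) * α)
      - Int.fract (((n : ℝ) + (h : ℝ)) * α) := by
    simp only [hD, Int.fract]
    push_cast
    ring
  have hf1 := Int.fract_nonneg ((n : ℝ) * α)
  have hf1' := Int.fract_lt_one ((n : ℝ) * α)
  have hf2 := Int.fract_nonneg (((n : ℝ) + (h : ℝ)) * α)
  have hf2' := Int.fract_lt_one (((n : ℝ) + (h : ℝ)) * α)
  have hf3 := Int.fract_nonneg ((h : ℝ) * α)
  have hf3' := Int.fract_lt_one ((h : ℝ) * α)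
  have hDlo : (-1 : ℝ) < D := by rw [key]; linarith
  have hDhi : (D : ℝ) < 2 := by rw [key]; linarith
  have hD01 : D = 0 ∨ D = 1 := by
    have l1 : (-1 : ℤ) < D := by exact_mod_cast hDlo
    have l2 : D < 2 := by exact_mod_cast hDhi
    omega
  constructor
  · intro hlt
    rcases hD01 with h0 | h1
    · omega
    · exfalso
      have : (D : ℝ) = 1 := by exact_mod_cast h1
      rw [this] at key
      linarith
  · intro hgt
    rcases hD01 with h0 | h1
    · exfalso
      have : (D : ℝ) = 0 := by exact_mod_cast h0
      rw [this] at key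
      linarith
    · omega
end

section
/- Suppose that for every $\delta > 0$ and $k \in \mathbb{N}$ there exist $c(\delta) > 0$ and $N(\delta) > 0$ such that for any probability space $(X, \mathcal{X}, \mu)$, any commuting measure preserving transformations $T_1, \dots, T_k$, and any set $A$ with $\mu(A) \geq \delta$, there is $0 < n < N(\delta)$ with $\mu(A \cap T_1^{-n}A \cap \dots \cap T_k^{-n}A) > c(\delta)$. Then for every $k \in \mathbb{N}$ and $\delta > 0$ there exists $c'(\delta) > 0$ such that for any irrational $\alpha$, any invertible measure preserving system $(X, \mathcal{X}, \mu, T)$ and any $A$ with $\mu(A) \geq \delta$, one has $\liminf_{N\to\infty} \frac{1}{N}\sum_{n=1}^{N}\mu(A \cap T^{-\lfloor n\alpha\rfloor}A \cap T^{-2\lfloor n\alpha\rfloor}A \cap \dots \cap T^{-k\lfloor n\alpha\rfloor}A) > c'(\delta)$, where $c'(\delta)$ is independent of $\alpha$. -/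
open MeasureTheory Filter

private lemma perm_coe_pow {X : Type*} (g : Equiv.Perm X) (n : ℕ) :
    (⇑g)^[n] = ⇑(g ^ n) := by
  induction n with
  | zero => simp
  | succ n ih =>
    rw [Function.iterate_succ, ih, pow_succ]
    ext x
    simp [Equiv.Perm.mul_apply]

private lemma perm_coe_zpow_iterate {X : Type*} (g : Equiv.Perm X) (z : ℤ) (n : ℕ) :
    (⇑(g ^ z))^[n] = ⇑(g ^ (z * n)) := by
  rw [perm_coe_pow, ← zpow_natCast (g ^ z) n, ← zpow_mul]

private lemma mp_zpow {X : Type} [MeasurableSpace X] {μ : Measure X} (T : Equiv.Perm X)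
    (hT : MeasurePreserving (⇑T) μ μ) (hTs : Measurable (⇑T.symm)) (z : ℤ) :
    MeasurePreserving (⇑(T ^ z)) μ μ := by
  have hsymm : MeasurePreserving (⇑T.symm) μ μ :=
    MeasurePreserving.symm (⟨T, hT.measurable, hTs⟩ : MeasurableEquiv X X) hT
  cases z with
  | ofNat n =>
    rw [Int.ofNat_eq_coe, zpow_natCast, ← perm_coe_pow]
    exact hT.iterate n
  | negSucc n =>
    rw [zpow_negSucc, ← inv_pow]
    have : (⇑((T⁻¹) ^ (n + 1)) : X → X) = (⇑T.symm)^[n + 1] := by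
      rw [← perm_coe_pow, Equiv.Perm.inv_def]
    rw [this]
    exact hsymm.iterate (n + 1)

private lemma core_count (γ t e : ℝ) (hγ0 : 0 < γ) (hγ1 : γ ≤ 1)
    (he0 : e ≠ 0) (he : |e| ≤ γ / 8) :
    ∃ j₁ : ℕ, (∀ i : ℕ, i < ⌊γ / (2 * |e|)⌋₊ →
        Int.fract (t + ((j₁ + i : ℕ) : ℝ) * e) < γ) ∧
      j₁ + ⌊γ / (2 * |e|)⌋₊ ≤ ⌈2 / |e|⌉₊ + 1 := by
  have hη0 : 0 < |e| := abs_pos.mpr he0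
  set η : ℝ := |e| with hη
  set R : ℕ := ⌊γ / (2 * η)⌋₊ with hR
  have hη1 : η ≤ 1 / 8 := le_trans he (by linarith)
  have hRle : (R : ℝ) ≤ γ / (2 * η) := Nat.floor_le (by positivity)
  have hRη : (R : ℝ) * η ≤ γ / 2 := by
    have h := mul_le_mul_of_nonneg_right hRle (le_of_lt hη0)
    have h2 : γ / (2 * η) * η = γ / 2 := by field_simp
    linarith
  have hJge : (2 / η : ℝ) ≤ (⌈2 / η⌉₊ : ℝ) := Nat.le_ceil _
  rcases lt_or_gt_of_ne he0 with hneg | hpos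
  · -- e < 0
    have hηe : η = -e := abs_of_neg hneg
    set z : ℤ := ⌊t⌋ - 1 with hz
    have hzt : (z : ℝ) ≤ t - 1 := by
      have h := Int.floor_le t
      push_cast [hz]; linarith
    have hzt2 : t - 2 < (z : ℝ) := by
      have h := Int.lt_floor_add_one t
      push_cast [hz]; linarith
    set left : ℝ := (t - z - γ) / η with hleft
    have hleftη : left * η = t - z - γ := by rw [hleft]; field_simp
    have hleft0 : 0 ≤ left := div_nonneg (by linarith) (le_of_lt hη0)
    have hfloor_le : (⌊left⌋₊ : ℝ) ≤ left := Nat.floor_le hleft0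
    have hfloor_gt : left < (⌊left⌋₊ : ℝ) + 1 := Nat.lt_floor_add_one left
    refine ⟨⌊left⌋₊ + 1, ?_, ?_⟩
    · intro i hi
      have hiR : (i : ℝ) + 1 ≤ R := by exact_mod_cast hi
      have hjgt : left < ((⌊left⌋₊ + 1 + i : ℕ) : ℝ) := by
        push_cast; linarith [Nat.cast_nonneg (α := ℝ) i]
      have hjle : ((⌊left⌋₊ + 1 + i : ℕ) : ℝ) ≤ left + 1 + i := by
        push_cast; linarith
      set jr : ℝ := ((⌊left⌋₊ + 1 + i : ℕ) : ℝ) with hjr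
      set x : ℝ := t + jr * e with hx
      have hxe : x = t - jr * η := by rw [hx, hηe]; ring
      have hup : x < (z : ℝ) + γ := by
        rw [hxe]
        have h := mul_lt_mul_of_pos_right hjgt hη0
        linarith
      have hlow : (z : ℝ) ≤ x := by
        rw [hxe]
        have h := mul_le_mul_of_nonneg_right hjle (le_of_lt hη0)
        have h2 : (1 + (i : ℝ)) * η ≤ (R : ℝ) * η :=
          mul_le_mul_of_nonneg_right (by linarith) (le_of_lt hη0)
        nlinarith
      have hfl : ⌊x⌋ = z := Int.floor_eq_iff.mpr ⟨hlow, by push_cast; linarith⟩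
      have hfr : Int.fract x = x - z := by rw [Int.fract, hfl]
      show Int.fract (t + ((⌊left⌋₊ + 1 + i : ℕ) : ℝ) * e) < γ
      rw [show t + ((⌊left⌋₊ + 1 + i : ℕ) : ℝ) * e = x from rfl, hfr]
      linarith
    · -- bound on j₁ + R
      have h2 : left ≤ (2 - γ) / η := by
        rw [hleft]
        exact (div_le_div_iff_of_pos_right hη0).mpr (by linarith)
      have h5 : γ / (2 * η) ≤ γ / η :=
        div_le_div_of_nonneg_left hγ0.le hη0 (by linarith)
      have h6 : (2 - γ) / η = 2 / η - γ / η := by ring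
      have hreal : ((⌊left⌋₊ + 1 + R : ℕ) : ℝ) ≤ ((⌈2 / η⌉₊ + 1 : ℕ) : ℝ) := by
        push_cast
        linarith
      exact (Nat.cast_le (α := ℝ)).mp hreal
  · -- e > 0
    have hηe : η = e := abs_of_pos hpos
    set z : ℤ := ⌈t⌉ with hz
    have hzt : t ≤ (z : ℝ) := Int.le_ceil t
    have hzt2 : (z : ℝ) < t + 1 := Int.ceil_lt_add_one t
    set left : ℝ := (z - t) / η with hleft
    have hleftη : left * η = z - t := by rw [hleft]; field_simp
    have hleft0 : 0 ≤ left := div_nonneg (by linarith) (le_of_lt hη0)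
    have hceil_ge : left ≤ (⌈left⌉₊ : ℝ) := Nat.le_ceil _
    have hceil_lt : (⌈left⌉₊ : ℝ) < left + 1 := Nat.ceil_lt_add_one hleft0
    refine ⟨⌈left⌉₊, ?_, ?_⟩
    · intro i hi
      have hiR : (i : ℝ) + 1 ≤ R := by exact_mod_cast hi
      have hjge : left ≤ ((⌈left⌉₊ + i : ℕ) : ℝ) := by
        push_cast; linarith [Nat.cast_nonneg (α := ℝ) i]
      have hjlt : ((⌈left⌉₊ + i : ℕ) : ℝ) < left + 1 + i := by
        push_cast; linarith
      set jr : ℝ := ((⌈left⌉₊ + i : ℕ) : ℝ) with hjr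
      set x : ℝ := t + jr * e with hx
      have hxe : x = t + jr * η := by rw [hx, hηe]
      have hlow : (z : ℝ) ≤ x := by
        rw [hxe]
        have h := mul_le_mul_of_nonneg_right hjge (le_of_lt hη0)
        linarith
      have hup : x < (z : ℝ) + γ := by
        rw [hxe]
        have h := mul_le_mul_of_nonneg_right hjlt.le (le_of_lt hη0)
        have h2 : (1 + (i : ℝ)) * η ≤ (R : ℝ) * η :=
          mul_le_mul_of_nonneg_right (by linarith) (le_of_lt hη0)
        nlinarith
      have hfl : ⌊x⌋ = z := Int.floor_eq_iff.mpr ⟨hlow, by push_cast; linarith⟩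
      have hfr : Int.fract x = x - z := by rw [Int.fract, hfl]
      show Int.fract (t + ((⌈left⌉₊ + i : ℕ) : ℝ) * e) < γ
      rw [show t + ((⌈left⌉₊ + i : ℕ) : ℝ) * e = x from rfl, hfr]
      linarith
    · have h2 : left < 1 / η := by
        rw [hleft]
        exact (div_lt_div_iff_of_pos_right hη0).mpr (by linarith)
      have h5 : γ / (2 * η) ≤ 1 / (2 * η) :=
        (div_le_div_iff_of_pos_right (by positivity)).mpr (by linarith)
      have h6 : 1 / η + 1 / (2 * η) ≤ 2 / η := by
        have : 1 / η + 1 / (2 * η) = (3 / 2) / η := by field_simp; ring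
        rw [this]
        exact (div_le_div_iff_of_pos_right hη0).mpr (by norm_num)
      have hreal : ((⌈left⌉₊ + R : ℕ) : ℝ) ≤ ((⌈2 / η⌉₊ + 1 : ℕ) : ℝ) := by
        push_cast
        linarith
      exact (Nat.cast_le (α := ℝ)).mp hreal
private lemma D_count (α γ : ℝ) (hγ0 : 0 < γ) (hγ1 : γ ≤ 1)
    (q : ℕ) (hq : 0 < q) (p : ℤ)
    (he0 : (q : ℝ) * α - p ≠ 0) (he : |(q : ℝ) * α - p| ≤ γ / 8) (B : ℕ) :
    B * (q * ⌊γ / (2 * |(q : ℝ) * α - p|)⌋₊) ≤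
      ((Finset.Icc 1 (q * (⌈2 / |(q : ℝ) * α - p|⌉₊ + 1) * B)).filter
        (fun n : ℕ => Int.fract ((n : ℝ) * α) < γ)).card := by
  set e : ℝ := (q : ℝ) * α - p with hedef
  set R : ℕ := ⌊γ / (2 * |e|)⌋₊ with hRdef
  set J : ℕ := ⌈2 / |e|⌉₊ + 1 with hJdef
  have hJ0 : 0 < J := Nat.succ_pos _
  have hcore : ∀ b r : ℕ, ∃ j₁ : ℕ,
      (∀ i : ℕ, i < R → Int.fract (((r + b * J * q : ℕ) : ℝ) * α + ((j₁ + i : ℕ) : ℝ) * e) < γ) ∧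
      j₁ + R ≤ J := by
    intro b r
    exact core_count γ (((r + b * J * q : ℕ) : ℝ) * α) e hγ0 hγ1 he0 he
  choose j₁f hj₁ hj₂ using hcore
  set f : ℕ × ℕ × ℕ → ℕ := fun bri => bri.2.1 + (bri.1 * J + (j₁f bri.1 bri.2.1 + bri.2.2)) * q
    with hfdef
  have hcard : (Finset.range B ×ˢ Finset.Icc 1 q ×ˢ Finset.range R).card = B * (q * R) := by
    simp [Finset.card_product]
  rw [← hcard]
  apply Finset.card_le_card_of_injOn f
  · rintro ⟨b, r, i⟩ hmem
    simp only [Finset.mem_coe, Finset.mem_product, Finset.mem_range, Finset.mem_Icc] at hmem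
    obtain ⟨hb, ⟨hr1, hr2⟩, hi⟩ := hmem
    have hjJ : j₁f b r + i < J := by
      have := hj₂ b r
      omega
    simp only [Finset.mem_coe, Finset.mem_filter, Finset.mem_Icc]
    refine ⟨⟨?_, ?_⟩, ?_⟩
    · simp only [hfdef]; omega
    · -- f ≤ q * J * B
      show r + (b * J + (j₁f b r + i)) * q ≤ q * J * B
      have h1 : b * J + (j₁f b r + i) + 1 ≤ B * J := by
        have : b + 1 ≤ B := hb
        calc b * J + (j₁f b r + i) + 1 ≤ b * J + J := by omega
          _ = (b + 1) * J := by ring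
          _ ≤ B * J := Nat.mul_le_mul_right J hb
      calc r + (b * J + (j₁f b r + i)) * q ≤ q + (b * J + (j₁f b r + i)) * q := by omega
        _ = (b * J + (j₁f b r + i) + 1) * q := by ring
        _ ≤ B * J * q := Nat.mul_le_mul_right q h1
        _ = q * J * B := by ring
    · -- fract condition
      show Int.fract ((((r + (b * J + (j₁f b r + i)) * q : ℕ)) : ℝ) * α) < γ
      have hrw : (((r + (b * J + (j₁f b r + i)) * q : ℕ)) : ℝ) * α
          = (((r + b * J * q : ℕ) : ℝ) * α + ((j₁f b r + i : ℕ) : ℝ) * e)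
            + ((((j₁f b r + i : ℕ) : ℤ) * p : ℤ) : ℝ) := by
        rw [hedef]
        push_cast
        ring
      rw [hrw, Int.fract_add_intCast]
      exact hj₁ b r i hi
  · -- injectivity
    rintro ⟨b, r, i⟩ hmem ⟨b', r', i'⟩ hmem' heq
    simp only [Finset.coe_product, Set.mem_prod, Finset.mem_coe, Finset.mem_range,
      Finset.mem_Icc] at hmem hmem'
    obtain ⟨hb, ⟨hr1, hr2⟩, hi⟩ := hmem
    obtain ⟨hb', ⟨hr1', hr2'⟩, hi'⟩ := hmem'
    simp only [hfdef] at heq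
    set M : ℕ := b * J + (j₁f b r + i) with hM
    set M' : ℕ := b' * J + (j₁f b' r' + i') with hM'
    have heq2 : (r - 1) + M * q = (r' - 1) + M' * q := by
      have h := heq
      change r + M * q = r' + M' * q at h
      zify [hr1, hr1'] at h ⊢
      linarith
    have hrr : r - 1 = r' - 1 := by
      have h1 : ((r - 1) + M * q) % q = (r - 1) % q := Nat.add_mul_mod_self_right _ _ _
      have h2 : ((r' - 1) + M' * q) % q = (r' - 1) % q := Nat.add_mul_mod_self_right _ _ _
      rw [heq2] at h1
      rw [h1] at h2
      rw [Nat.mod_eq_of_lt (by omega), Nat.mod_eq_of_lt (by omega)] at h2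
      omega
    have hrr' : r = r' := by omega
    have hMM : M = M' := by
      have : M * q = M' * q := by
        zify at heq2 ⊢
        omega
      exact Nat.eq_of_mul_eq_mul_right hq this
    have hjJ : j₁f b r + i < J := by have := hj₂ b r; omega
    have hjJ' : j₁f b' r' + i' < J := by have := hj₂ b' r'; omega
    have hbb : b = b' := by
      rw [hM, hM'] at hMM
      rcases Nat.lt_trichotomy b b' with h | h | h
      · exfalso
        have : b * J + (j₁f b r + i) < b' * J := by
          calc b * J + (j₁f b r + i) < b * J + J := by omega
            _ = (b + 1) * J := by ring
            _ ≤ b' * J := Nat.mul_le_mul_right J h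
        omega
      · exact h
      · exfalso
        have : b' * J + (j₁f b' r' + i') < b * J := by
          calc b' * J + (j₁f b' r' + i') < b' * J + J := by omega
            _ = (b' + 1) * J := by ring
            _ ≤ b * J := Nat.mul_le_mul_right J h
        omega
    have hii : i = i' := by
      rw [hM, hM', hbb, hrr'] at hMM
      omega
    exact Prod.ext hbb (Prod.ext hrr' hii)


private lemma floor_mul_eq {α : ℝ} {N₀ : ℕ} (hN₀ : 0 < N₀) {a n : ℕ}
    (hfr : Int.fract ((a : ℝ) * α) < 1 / (N₀ : ℝ)) (hn : n < N₀) :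
    ⌊((a * n : ℕ) : ℝ) * α⌋ = (n : ℤ) * ⌊(a : ℝ) * α⌋ := by
  have hN0R : (0 : ℝ) < (N₀ : ℝ) := by exact_mod_cast hN₀
  have hfr0 : 0 ≤ Int.fract ((a : ℝ) * α) := Int.fract_nonneg _
  have hnn : (n : ℝ) ≤ (N₀ : ℝ) - 1 := by
    have h : (n : ℝ) + 1 ≤ (N₀ : ℝ) := by exact_mod_cast hn
    linarith
  have hkey : (n : ℝ) * Int.fract ((a : ℝ) * α) < 1 := by
    have h1 : (n : ℝ) * Int.fract ((a : ℝ) * α) ≤ ((N₀ : ℝ) - 1) * Int.fract ((a : ℝ) * α) :=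
      mul_le_mul_of_nonneg_right hnn hfr0
    have h2 : ((N₀ : ℝ) - 1) * Int.fract ((a : ℝ) * α) ≤ ((N₀ : ℝ) - 1) * (1 / (N₀ : ℝ)) :=
      mul_le_mul_of_nonneg_left hfr.le (by linarith)
    have h3 : ((N₀ : ℝ) - 1) * (1 / (N₀ : ℝ)) < 1 := by
      rw [mul_one_div, div_lt_one hN0R]; linarith
    linarith
  have hx : (a : ℝ) * (n : ℝ) * α
      = (n : ℝ) * (⌊(a : ℝ) * α⌋ : ℝ) + (n : ℝ) * Int.fract ((a : ℝ) * α) := by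
    have h := Int.floor_add_fract ((a : ℝ) * α)
    nlinarith [h]
  apply Int.floor_eq_iff.mpr
  constructor
  · push_cast
    have h0 : 0 ≤ (n : ℝ) * Int.fract ((a : ℝ) * α) := by positivity
    linarith [hx]
  · push_cast
    linarith [hx]

private lemma arith_bound {n a b q j r m s : ℝ}
    (hm : 1 ≤ m) (hq : 1 ≤ q) (hj : 1 ≤ j) (hb : 1 ≤ b) (hr : 0 ≤ r) (hs : 0 ≤ s)
    (hA1 : n < (a + 1) * m) (hA2 : a < (b + 1) * (q * j))
    (h16 : j ≤ 16 * m * r) (hD : b * (q * r) ≤ m * s) :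
    n ≤ 48 * m ^ 3 * s := by
  have e2 : n < ((b + 1) * (q * j) + 1) * m := by
    have h1 : a + 1 ≤ (b + 1) * (q * j) + 1 := by linarith
    calc n < (a + 1) * m := hA1
      _ ≤ ((b + 1) * (q * j) + 1) * m := by
          apply mul_le_mul_of_nonneg_right h1 (by linarith)
  have hqj : (1 : ℝ) ≤ q * j := by
    have := mul_le_mul hq hj zero_le_one (by linarith : (0:ℝ) ≤ q)
    linarith
  have p2 : (1 : ℝ) ≤ b * (q * j) := by
    have := mul_le_mul hb hqj zero_le_one (by linarith : (0:ℝ) ≤ b)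
    linarith
  have p1 : q * j ≤ b * (q * j) := le_mul_of_one_le_left (by linarith) hb
  have e3 : ((b + 1) * (q * j) + 1) * m ≤ 3 * (b * (q * j)) * m := by
    have h : (b + 1) * (q * j) + 1 ≤ 3 * (b * (q * j)) := by nlinarith [p1, p2]
    exact mul_le_mul_of_nonneg_right h (by linarith)
  have e4 : 3 * (b * (q * j)) * m ≤ 3 * (b * (q * (16 * m * r))) * m := by
    have h2 : b * (q * j) ≤ b * (q * (16 * m * r)) := by
      apply mul_le_mul_of_nonneg_left _ (by linarith)
      apply mul_le_mul_of_nonneg_left h16 (by linarith)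
    apply mul_le_mul_of_nonneg_right (by linarith) (by linarith)
  have e5 : 3 * (b * (q * (16 * m * r))) * m = 48 * m ^ 2 * (b * (q * r)) := by ring
  have e6 : 48 * m ^ 2 * (b * (q * r)) ≤ 48 * m ^ 2 * (m * s) := by
    apply mul_le_mul_of_nonneg_left hD (by positivity)
  have e7 : 48 * m ^ 2 * (m * s) = 48 * m ^ 3 * s := by ring
  linarith

private lemma arith_bound2 {c n K s : ℝ} (hc : 0 ≤ c) (hn : 0 < n) (hK : 0 < K)
    (h : n ≤ K * s) : c / K ≤ c * s / n := by
  rw [div_le_div_iff₀ hK hn]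
  nlinarith

/-- Assuming the uniform multidimensional Szemerédi theorem of
Bergelson–Host–McCutcheon–Parreau (for commuting measure preserving
transformations), one gets uniform multiple recurrence along `⌊nα⌋, 2⌊nα⌋, …, k⌊nα⌋`
for any irrational `α`, with a lower bound independent of `α`. -/
theorem uniform_recurrence_along_floor_multiples
    (H : ∀ (k : ℕ), 0 < k → ∀ δ : ℝ, 0 < δ →
      ∃ c : ℝ, 0 < c ∧ ∃ N₀ : ℕ, 0 < N₀ ∧
        ∀ (X : Type) (_ : MeasurableSpace X) (μ : Measure X), IsProbabilityMeasure μ →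
          ∀ T : Fin k → X → X,
            (∀ i, MeasurePreserving (T i) μ μ) →
            (∀ i j, (T i) ∘ (T j) = (T j) ∘ (T i)) →
            ∀ A : Set X, MeasurableSet A → δ ≤ (μ A).toReal →
              ∃ n : ℕ, 0 < n ∧ n < N₀ ∧
                c < (μ (A ∩ ⋂ i : Fin k, (T i)^[n] ⁻¹' A)).toReal) :
    ∀ (k : ℕ), 0 < k → ∀ δ : ℝ, 0 < δ →
      ∃ c' : ℝ, 0 < c' ∧
        ∀ (α : ℝ), Irrational α →
          ∀ (X : Type) (_ : MeasurableSpace X) (μ : Measure X), IsProbabilityMeasure μ →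
            ∀ T : Equiv.Perm X, MeasurePreserving (⇑T) μ μ →
              Measurable (⇑T.symm) →
              ∀ A : Set X, MeasurableSet A → δ ≤ (μ A).toReal →
                c' < atTop.liminf (fun N : ℕ =>
                  (N : ℝ)⁻¹ * ∑ n ∈ Finset.Icc 1 N,
                    (μ (A ∩ ⋂ i ∈ Finset.Icc 1 k,
                      (⇑(T ^ ((i : ℤ) * ⌊(n : ℝ) * α⌋)))⁻¹' A)).toReal) := by
  intro k hk δ hδ
  obtain ⟨c, hc, N₀, hN₀, HH⟩ := H k hk δ hδ
  have hN₀R0 : (0 : ℝ) < (N₀ : ℝ) := by exact_mod_cast hN₀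
  refine ⟨c / (64 * (N₀ : ℝ) ^ 3), by positivity, ?_⟩
  intro α hα X mX μ hμ T hT hTs A hA hAδ
  set term : ℕ → ℝ := fun m =>
    (μ (A ∩ ⋂ i ∈ Finset.Icc 1 k, (⇑(T ^ ((i : ℤ) * ⌊(m : ℝ) * α⌋)))⁻¹' A)).toReal
    with htermdef
  have hgoal : (fun N : ℕ => (N : ℝ)⁻¹ * ∑ n ∈ Finset.Icc 1 N,
      (μ (A ∩ ⋂ i ∈ Finset.Icc 1 k,
        (⇑(T ^ ((i : ℤ) * ⌊(n : ℝ) * α⌋)))⁻¹' A)).toReal)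
      = (fun N : ℕ => (N : ℝ)⁻¹ * ∑ n ∈ Finset.Icc 1 N, term n) := rfl
  rw [hgoal]
  have hterm0 : ∀ m, 0 ≤ term m := fun m => ENNReal.toReal_nonneg
  have hterm1 : ∀ m, term m ≤ 1 := by
    intro m
    rw [htermdef]
    have h1 : μ (A ∩ ⋂ i ∈ Finset.Icc 1 k,
        (⇑(T ^ ((i : ℤ) * ⌊(m : ℝ) * α⌋)))⁻¹' A) ≤ 1 := prob_le_one
    have h2 := ENNReal.toReal_mono ENNReal.one_ne_top h1
    simpa using h2
  have key : ∀ a : ℕ, 0 < a → Int.fract ((a : ℝ) * α) < 1 / (N₀ : ℝ) →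
      ∃ n : ℕ, 0 < n ∧ n < N₀ ∧ c < term (a * n) := by
    intro a ha hfr
    set b : ℤ := ⌊(a : ℝ) * α⌋ with hb
    obtain ⟨n, hn0, hnN, hval⟩ := HH X mX μ hμ
      (fun i : Fin k => ⇑(T ^ ((((i : ℕ) : ℤ) + 1) * b)))
      (fun i => mp_zpow T hT hTs _)
      (by
        intro i j
        ext x
        simp only [Function.comp_apply, ← Equiv.Perm.mul_apply, ← zpow_add]
        rw [add_comm])
      A hA hAδ
    refine ⟨n, hn0, hnN, ?_⟩
    have hfl : ⌊((a * n : ℕ) : ℝ) * α⌋ = (n : ℤ) * b := floor_mul_eq hN₀ hfr hnN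
    have hset : (A ∩ ⋂ i : Fin k,
        ((fun i : Fin k => ⇑(T ^ ((((i : ℕ) : ℤ) + 1) * b))) i)^[n] ⁻¹' A)
        = A ∩ ⋂ i ∈ Finset.Icc 1 k, (⇑(T ^ ((i : ℤ) * ⌊((a * n : ℕ) : ℝ) * α⌋)))⁻¹' A := by
      rw [hfl]
      congr 1
      ext x
      simp only [Set.mem_iInter, Set.mem_preimage, perm_coe_zpow_iterate]
      constructor
      · intro h i hi
        simp only [Finset.mem_Icc] at hi
        have h2 := h ⟨i - 1, by omega⟩
        have he : ((((⟨i - 1, by omega⟩ : Fin k) : ℕ) : ℤ) + 1) * b * (n : ℤ)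
            = (i : ℤ) * ((n : ℤ) * b) := by
          simp only []
          have : (((i - 1 : ℕ)) : ℤ) = (i : ℤ) - 1 := by
            push_cast [hi.1]
            ring
          rw [this]
          ring
        rwa [he] at h2
      · intro h i
        have hi : (i : ℕ) + 1 ∈ Finset.Icc 1 k := by
          simp only [Finset.mem_Icc]
          have := i.2
          omega
        have h2 := h ((i : ℕ) + 1) hi
        have he : (((i : ℕ) + 1 : ℕ) : ℤ) * ((n : ℤ) * b)
            = ((((i : ℕ) : ℤ) + 1) * b) * (n : ℤ) := by
          push_cast
          ring
        rwa [he] at h2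
    rwa [hset] at hval
  classical
  have hN₀R : (0 : ℝ) < (N₀ : ℝ) := by exact_mod_cast hN₀
  set γ : ℝ := 1 / (N₀ : ℝ) with hγdef
  have hγ0 : 0 < γ := by positivity
  have hγ1 : γ ≤ 1 := by
    rw [hγdef, div_le_one hN₀R]
    exact_mod_cast hN₀
  -- choice function
  have key' : ∀ a : ℕ, ∃ n : ℕ, 0 < a → Int.fract ((a : ℝ) * α) < γ →
      0 < n ∧ n < N₀ ∧ c < term (a * n) := by
    intro a
    by_cases h1 : 0 < a
    · by_cases h2 : Int.fract ((a : ℝ) * α) < γ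
      · obtain ⟨n, hn⟩ := key a h1 h2
        exact ⟨n, fun _ _ => hn⟩
      · exact ⟨1, fun _ h => absurd h h2⟩
    · exact ⟨1, fun h => absurd h h1⟩
  choose nf hnf using key'
  -- Dirichlet
  obtain ⟨p, qz, hqz0, hqzle, hqz⟩ := Real.exists_int_int_abs_mul_sub_le α
    (n := 8 * N₀) (by positivity)
  set q : ℕ := qz.toNat with hqdef
  have hq0 : 0 < q := by omega
  have hqcast : ((q : ℕ) : ℝ) = (qz : ℝ) := by
    rw [hqdef]
    exact_mod_cast Int.toNat_of_nonneg hqz0.le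
  set e : ℝ := (q : ℝ) * α - p with hedef
  have he0 : e ≠ 0 := by
    intro h0
    apply hα
    refine ⟨(p : ℚ) / (q : ℚ), ?_⟩
    have hqR : ((q : ℕ) : ℝ) ≠ 0 := by positivity
    push_cast
    rw [div_eq_iff hqR]
    rw [hedef] at h0
    linarith
  have he8 : |e| ≤ γ / 8 := by
    have h1 : |e| ≤ 1 / ((8 * N₀ : ℕ) + 1 : ℝ) := by
      rw [hedef, hqcast]
      exact_mod_cast hqz
    have h2 : (1 : ℝ) / ((8 * N₀ : ℕ) + 1 : ℝ) ≤ 1 / (8 * (N₀ : ℝ)) := by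
      apply div_le_div_of_nonneg_left one_pos.le (by positivity)
      push_cast
      linarith
    have h3 : (1 : ℝ) / (8 * (N₀ : ℝ)) = γ / 8 := by
      rw [hγdef]
      field_simp
    linarith
  have hη0 : 0 < |e| := abs_pos.mpr he0
  set R : ℕ := ⌊γ / (2 * |e|)⌋₊ with hRdef
  set J : ℕ := ⌈2 / |e|⌉₊ + 1 with hJdef
  have hJ0 : 0 < J := Nat.succ_pos _
  -- R ≥ γ/(4|e|), J ≤ 4/|e|, hence J ≤ 16 N₀ R
  have hR4 : γ / (4 * |e|) ≤ (R : ℝ) := by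
    have h1 : γ / (2 * |e|) - 1 < (R : ℝ) := Nat.sub_one_lt_floor _
    have h2 : 1 ≤ γ / (4 * |e|) := by
      rw [le_div_iff₀ (by positivity)]
      linarith
    have h3 : γ / (4 * |e|) + γ / (4 * |e|) = γ / (2 * |e|) := by
      field_simp
      ring
    linarith
  have hJ4 : (J : ℝ) ≤ 4 / |e| := by
    have h1 : (⌈2 / |e|⌉₊ : ℝ) < 2 / |e| + 1 := Nat.ceil_lt_add_one (by positivity)
    have h2 : (2 : ℝ) ≤ 2 / |e| := by
      rw [le_div_iff₀ hη0]
      have : |e| ≤ 1 := by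
        have : γ / 8 ≤ 1 := by linarith
        linarith
      linarith
    have : (J : ℝ) = (⌈2 / |e|⌉₊ : ℝ) + 1 := by rw [hJdef]; push_cast; ring
    rw [this]
    have h4 : 2 / |e| + 2 / |e| = 4 / |e| := by ring
    linarith
  have h16 : (J : ℝ) ≤ 16 * (N₀ : ℝ) * (R : ℝ) := by
    have h1 : 16 * (N₀ : ℝ) * (γ / (4 * |e|)) = 4 / |e| := by
      rw [hγdef]
      field_simp
      ring
    have h2 : 16 * (N₀ : ℝ) * (γ / (4 * |e|)) ≤ 16 * (N₀ : ℝ) * (R : ℝ) :=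
      mul_le_mul_of_nonneg_left hR4 (by positivity)
    linarith
  have hR0 : 0 < R := by
    have : (0 : ℝ) < (R : ℝ) := lt_of_lt_of_le (by positivity) hR4
    exact_mod_cast this
  -- eventual lower bound
  have hev : ∀ᶠ N : ℕ in atTop,
      c / (48 * (N₀ : ℝ) ^ 3) ≤ (N : ℝ)⁻¹ * ∑ n ∈ Finset.Icc 1 N, term n := by
    rw [eventually_atTop]
    refine ⟨q * J * N₀ + 1, ?_⟩
    intro N hN
    have hN1 : 1 ≤ N := by
      have : 1 ≤ q * J * N₀ := Nat.one_le_iff_ne_zero.mpr (by positivity)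
      omega
    have hNR : (0 : ℝ) < (N : ℝ) := by exact_mod_cast hN1
    set A' : ℕ := N / N₀ with hA'def
    set B : ℕ := A' / (q * J) with hBdef
    have hB1 : 1 ≤ B := by
      have h1 : q * J * N₀ ≤ N := by omega
      have h2 : q * J ≤ A' := by
        rw [hA'def]
        exact (Nat.le_div_iff_mul_le hN₀).mpr h1
      rw [hBdef]
      exact (Nat.le_div_iff_mul_le (by positivity)).mpr (by omega)
    set Dset : Finset ℕ := (Finset.Icc 1 A').filter (fun a : ℕ => Int.fract ((a : ℝ) * α) < γ)
      with hDdef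
    set Sset : Finset ℕ := (Finset.Icc 1 N).filter (fun m : ℕ => c < term m) with hSdef
    -- counting chain
    have hD1 : B * (q * R) ≤ Dset.card := by
      have h1 := D_count α γ hγ0 hγ1 q hq0 p he0 he8 B
      have h2 : q * J * B ≤ A' := by
        rw [hBdef]
        calc q * J * B = B * (q * J) := by ring
          _ ≤ A' := Nat.div_mul_le_self A' (q * J)
      have h3 : ((Finset.Icc 1 (q * J * B)).filter
          (fun n : ℕ => Int.fract ((n : ℝ) * α) < γ)).card ≤ Dset.card := by
        apply Finset.card_le_card
        apply Finset.filter_subset_filter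
        exact Finset.Icc_subset_Icc_right h2
      rw [← hedef, ← hRdef, ← hJdef] at h1
      exact le_trans h1 h3
    have hmem : ∀ a ∈ Dset, 0 < a ∧ Int.fract ((a : ℝ) * α) < γ ∧ a ≤ A' := by
      intro a haa
      rw [hDdef, Finset.mem_filter, Finset.mem_Icc] at haa
      exact ⟨by omega, haa.2, haa.1.2⟩
    have hD2 : Dset.card ≤ N₀ * Sset.card := by
      have himg : ∀ a ∈ Dset, a * nf a ∈ Sset := by
        intro a haa
        obtain ⟨ha0, hafr, haA⟩ := hmem a haa
        obtain ⟨hn0, hnN, hval⟩ := hnf a ha0 hafr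
        rw [hSdef, Finset.mem_filter, Finset.mem_Icc]
        refine ⟨⟨Nat.mul_pos ha0 hn0, ?_⟩, hval⟩
        calc a * nf a ≤ A' * N₀ := by
              apply Nat.mul_le_mul haA hnN.le
          _ ≤ N := by
              rw [hA'def]
              exact Nat.div_mul_le_self N N₀
      have h1 : Dset.card ≤ N₀ * (Dset.image (fun a => a * nf a)).card := by
        apply Finset.card_le_mul_card_image
        intro m hm
        have : ((Dset.filter (fun a => a * nf a = m))).card ≤ (Finset.range N₀).card := by
          apply Finset.card_le_card_of_injOn (fun a => nf a)
          · intro a haf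
            rw [Finset.mem_coe, Finset.mem_filter] at haf
            obtain ⟨ha0, hafr, _⟩ := hmem a haf.1
            obtain ⟨hn0, hnN, _⟩ := hnf a ha0 hafr
            exact Finset.mem_range.mpr hnN
          · intro a haf a' haf' hnn
            simp only [Finset.coe_filter, Set.mem_setOf_eq] at haf haf'
            obtain ⟨ha0, hafr, _⟩ := hmem a haf.1
            obtain ⟨ha0', hafr', _⟩ := hmem a' haf'.1
            obtain ⟨hn0', _, _⟩ := hnf a' ha0' hafr'
            have hnn' : nf a = nf a' := hnn
            have hthis : a * nf a = a' * nf a' := by rw [haf.2, haf'.2]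
            rw [hnn'] at hthis
            exact Nat.eq_of_mul_eq_mul_right hn0' hthis
        simpa using this
      have h2 : (Dset.image (fun a => a * nf a)).card ≤ Sset.card := by
        apply Finset.card_le_card
        intro m hm
        rw [Finset.mem_image] at hm
        obtain ⟨a, haa, rfl⟩ := hm
        exact himg a haa
      calc Dset.card ≤ N₀ * (Dset.image (fun a => a * nf a)).card := h1
        _ ≤ N₀ * Sset.card := Nat.mul_le_mul_left N₀ h2
    -- sum bounds
    have hsum1 : ∑ m ∈ Sset, term m ≤ ∑ m ∈ Finset.Icc 1 N, term m := by
      apply Finset.sum_le_sum_of_subset_of_nonneg (Finset.filter_subset _ _)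
      intro i _ _
      exact hterm0 i
    have hsum2 : (Sset.card : ℝ) * c ≤ ∑ m ∈ Sset, term m := by
      have := Finset.card_nsmul_le_sum Sset term c (fun m hm => by
        rw [hSdef, Finset.mem_filter] at hm
        exact hm.2.le)
      rwa [nsmul_eq_mul] at this
    -- real arithmetic
    have hmR : (1 : ℝ) ≤ (N₀ : ℝ) := by exact_mod_cast hN₀
    have hqR : (1 : ℝ) ≤ (q : ℝ) := by exact_mod_cast hq0
    have hJR : (1 : ℝ) ≤ (J : ℝ) := by exact_mod_cast hJ0
    have hBR : (1 : ℝ) ≤ (B : ℝ) := by exact_mod_cast hB1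
    have hA1 : (N : ℝ) < ((A' : ℝ) + 1) * (N₀ : ℝ) := by
      have h1 : N % N₀ < N₀ := Nat.mod_lt N hN₀
      have h2 : N₀ * A' + N % N₀ = N := by rw [hA'def]; exact Nat.div_add_mod N N₀
      have h1' : ((N % N₀ : ℕ) : ℝ) < (N₀ : ℝ) := by exact_mod_cast h1
      have h2' : (N₀ : ℝ) * (A' : ℝ) + ((N % N₀ : ℕ) : ℝ) = (N : ℝ) := by exact_mod_cast h2
      have hexp : ((A' : ℝ) + 1) * (N₀ : ℝ) = (N₀ : ℝ) * (A' : ℝ) + (N₀ : ℝ) := by ring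
      linarith
    have hA2 : (A' : ℝ) < ((B : ℝ) + 1) * ((q : ℝ) * (J : ℝ)) := by
      have hqJ : 0 < q * J := by positivity
      have h1 : A' % (q * J) < q * J := Nat.mod_lt A' hqJ
      have h2 : (q * J) * B + A' % (q * J) = A' := by rw [hBdef]; exact Nat.div_add_mod A' (q * J)
      have h1' : ((A' % (q * J) : ℕ) : ℝ) < (q : ℝ) * (J : ℝ) := by
        have h := (Nat.cast_lt (α := ℝ)).mpr h1
        rwa [Nat.cast_mul] at h
      have h2' : ((q : ℝ) * (J : ℝ)) * (B : ℝ) + ((A' % (q * J) : ℕ) : ℝ) = (A' : ℝ) := by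
        have h := congrArg (fun x : ℕ => (x : ℝ)) h2
        simp only [Nat.cast_add, Nat.cast_mul] at h
        exact h
      have hexp : ((B : ℝ) + 1) * ((q : ℝ) * (J : ℝ))
          = ((q : ℝ) * (J : ℝ)) * (B : ℝ) + (q : ℝ) * (J : ℝ) := by ring
      linarith
    have hD1R : (B : ℝ) * ((q : ℝ) * (R : ℝ)) ≤ (N₀ : ℝ) * (Sset.card : ℝ) := by
      have h : (B * (q * R) : ℕ) ≤ (N₀ * Sset.card : ℕ) := le_trans hD1 hD2
      exact_mod_cast h
    have hS : (N : ℝ) ≤ 48 * (N₀ : ℝ) ^ 3 * (Sset.card : ℝ) :=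
      arith_bound hmR hqR hJR hBR (Nat.cast_nonneg _) (Nat.cast_nonneg _) hA1 hA2 h16 hD1R
    -- conclude
    have hfinal : c / (48 * (N₀ : ℝ) ^ 3) ≤ c * (Sset.card : ℝ) / (N : ℝ) :=
      arith_bound2 hc.le hNR (by positivity) hS
    have h2 : c * (Sset.card : ℝ) / (N : ℝ)
        = (N : ℝ)⁻¹ * ((Sset.card : ℝ) * c) := by ring
    have h3 : (N : ℝ)⁻¹ * ((Sset.card : ℝ) * c)
        ≤ (N : ℝ)⁻¹ * ∑ n ∈ Finset.Icc 1 N, term n := by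
      apply mul_le_mul_of_nonneg_left _ (by positivity)
      linarith
    linarith
  -- liminf
  have hbdd : IsBoundedUnder (· ≤ ·) atTop (fun N : ℕ =>
      (N : ℝ)⁻¹ * ∑ n ∈ Finset.Icc 1 N, term n) := by
    refine isBoundedUnder_of ⟨1, ?_⟩
    intro N
    rcases Nat.eq_zero_or_pos N with h | h
    · subst h
      simp
    · have hNR : (0 : ℝ) < (N : ℝ) := by exact_mod_cast h
      have h1 : ∑ n ∈ Finset.Icc 1 N, term n ≤ (N : ℝ) := by
        have := Finset.sum_le_card_nsmul (Finset.Icc 1 N) term 1 (fun m _ => hterm1 m)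
        rw [Nat.card_Icc] at this
        simpa using this
      calc (N : ℝ)⁻¹ * ∑ n ∈ Finset.Icc 1 N, term n ≤ (N : ℝ)⁻¹ * (N : ℝ) := by
            apply mul_le_mul_of_nonneg_left h1 (by positivity)
        _ = 1 := inv_mul_cancel₀ (ne_of_gt hNR)
  have hlim : c / (48 * (N₀ : ℝ) ^ 3) ≤ atTop.liminf (fun N : ℕ =>
      (N : ℝ)⁻¹ * ∑ n ∈ Finset.Icc 1 N, term n) :=
    le_liminf_of_le hbdd.isCoboundedUnder_ge hev
  have hcube : (0 : ℝ) < (N₀ : ℝ) ^ 3 := by positivity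
  have hlt : c / (64 * (N₀ : ℝ) ^ 3) < c / (48 * (N₀ : ℝ) ^ 3) := by
    apply div_lt_div_of_pos_left hc (by positivity)
    linarith
  exact lt_of_lt_of_le hlt hlim
end

section
/- For functions $a: \mathbb{Z}/N\mathbb{Z} \to \mathbb{C}$, define $\|a\|_{U^1} = |\mathbb{E}_{n\in\mathbb{Z}_N} a(n)|$ and $\|a\|_{U^{d+1}} = \left(\mathbb{E}_{h\in\mathbb{Z}_N}\|a(\cdot+h)\overline{a(\cdot)}\|_{U^d}^{2^d}\right)^{1/2^{d+1}}$. Then for any $a,b: \mathbb{Z}_N \to \mathbb{C}$ and $d \geq 1$: $\|a+b\|_{U^d} \leq \|a\|_{U^d} + \|b\|_{U^d}$ (the triangle inequality for the Gowers uniformity norm). -/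
open Finset

/-- The Gowers uniformity norm `U^d` on `ℤ/Nℤ`, defined inductively:
`‖a‖_{U^1} = |𝔼_n a(n)|` and
`‖a‖_{U^{d+1}} = (𝔼_h ‖a(·+h)·conj(a)‖_{U^d}^{2^d})^{1/2^{d+1}}`.
(The value at `d = 0` is junk.) -/
noncomputable def gowersNorm (N : ℕ) [NeZero N] : ℕ → (ZMod N → ℂ) → ℝ
  | 0, _ => 0
  | 1, a => ‖(∑ n : ZMod N, a n) / (N : ℂ)‖
  | (d + 2), a =>
      ((∑ h : ZMod N,
        (gowersNorm N (d + 1) (fun n => a (n + h) * (starRingEnd ℂ) (a n))) ^ (2 ^ (d + 1)))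
          / (N : ℝ)) ^ (((2 : ℝ) ^ (d + 2))⁻¹)

set_option maxHeartbeats 1000000


variable (N : ℕ) [NeZero N]

noncomputable def cnj (k : ℕ) (z : ℂ) : ℂ := if Even k then z else (starRingEnd ℂ) z

lemma cnj_succ (k : ℕ) (z : ℂ) : cnj (k + 1) z = (starRingEnd ℂ) (cnj k z) := by
  by_cases h : Even k
  · simp [cnj, h, Nat.even_add_one]
  · simp [cnj, h, Nat.even_add_one, Complex.conj_conj]

lemma cnj_add (k : ℕ) (z w : ℂ) : cnj k (z + w) = cnj k z + cnj k w := by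
  unfold cnj; split <;> simp

def wt {d : ℕ} (ω : Fin d → Bool) : ℕ := ∑ i, if ω i then 1 else 0

def dot {d : ℕ} (ω : Fin d → Bool) (h : Fin d → ZMod N) : ZMod N := ∑ i, if ω i then h i else 0

lemma wt_cons {d : ℕ} (b : Bool) (ω : Fin d → Bool) :
    wt (Fin.cons b ω) = (if b then 1 else 0) + wt ω := by
  rw [wt, wt, Fin.sum_univ_succ]
  simp only [Fin.cons_zero, Fin.cons_succ]

lemma dot_cons {d : ℕ} (b : Bool) (ω : Fin d → Bool) (h0 : ZMod N) (h : Fin d → ZMod N) :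
    dot N (Fin.cons b ω) (Fin.cons h0 h) = (if b then h0 else 0) + dot N ω h := by
  rw [dot, dot, Fin.sum_univ_succ]
  simp only [Fin.cons_zero, Fin.cons_succ]

noncomputable def gsum (d : ℕ) (f : (Fin d → Bool) → ZMod N → ℂ) : ℂ :=
  ∑ x : ZMod N, ∑ h : Fin d → ZMod N, ∏ ω : Fin d → Bool, cnj (wt ω) (f ω (x + dot N ω h))

noncomputable def Usum (d : ℕ) (f : (Fin (d+1) → Bool) → ZMod N → ℂ) (h : Fin d → ZMod N) : ℂ :=
  ∑ x : ZMod N, ∏ ω : Fin d → Bool, cnj (wt ω) (f (Fin.cons false ω) (x + dot N ω h))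

noncomputable def Vsum (d : ℕ) (f : (Fin (d+1) → Bool) → ZMod N → ℂ) (h : Fin d → ZMod N) : ℂ :=
  ∑ y : ZMod N, ∏ ω : Fin d → Bool, cnj (wt ω + 1) (f (Fin.cons true ω) (y + dot N ω h))

lemma prod_cube_split {d : ℕ} (g : (Fin (d+1) → Bool) → ℂ) :
    ∏ Ω : Fin (d+1) → Bool, g Ω =
      (∏ ω : Fin d → Bool, g (Fin.cons false ω)) * ∏ ω : Fin d → Bool, g (Fin.cons true ω) := by
  rw [← Fintype.prod_equiv (Fin.consEquiv fun _ => Bool) (fun p => g (Fin.cons p.1 p.2)) g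
    (fun p => rfl), Fintype.prod_prod_type, Fintype.prod_bool, mul_comm]

lemma gsum_split (d : ℕ) (f : (Fin (d+1) → Bool) → ZMod N → ℂ) :
    gsum N (d+1) f = ∑ h : Fin d → ZMod N, Usum N d f h * Vsum N d f h := by
  have key : ∀ (x h0 : ZMod N) (h : Fin d → ZMod N),
      (∏ Ω : Fin (d+1) → Bool, cnj (wt Ω) (f Ω (x + dot N Ω (Fin.cons h0 h)))) =
      (∏ ω : Fin d → Bool, cnj (wt ω) (f (Fin.cons false ω) (x + dot N ω h))) *
      (∏ ω : Fin d → Bool, cnj (wt ω + 1) (f (Fin.cons true ω) ((x + h0) + dot N ω h))) := by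
    intro x h0 h
    rw [prod_cube_split]
    congr 1
    · apply Fintype.prod_congr
      intro ω
      have h1 : wt (Fin.cons false ω) = wt ω := by rw [wt_cons]; simp
      have h2 : dot N (Fin.cons false ω) (Fin.cons h0 h) = dot N ω h := by rw [dot_cons]; simp
      rw [h1, h2]
    · apply Fintype.prod_congr
      intro ω
      have h1 : wt (Fin.cons true ω) = wt ω + 1 := by rw [wt_cons]; simp [add_comm]
      have h2 : dot N (Fin.cons true ω) (Fin.cons h0 h) = h0 + dot N ω h := by
        rw [dot_cons]; simp
      rw [h1, h2, add_assoc]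
  calc gsum N (d+1) f
      = ∑ x : ZMod N, ∑ p : ZMod N × (Fin d → ZMod N),
          ∏ Ω : Fin (d+1) → Bool, cnj (wt Ω) (f Ω (x + dot N Ω (Fin.cons p.1 p.2))) := by
        rw [gsum]
        refine Finset.sum_congr rfl fun x _ => ?_
        exact (Fintype.sum_equiv (Fin.consEquiv fun _ => ZMod N)
          (fun p => ∏ Ω : Fin (d+1) → Bool, cnj (wt Ω) (f Ω (x + dot N Ω (Fin.cons p.1 p.2))))
          _ (fun p => rfl)).symm
    _ = ∑ x : ZMod N, ∑ h0 : ZMod N, ∑ h : Fin d → ZMod N,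
          (∏ ω : Fin d → Bool, cnj (wt ω) (f (Fin.cons false ω) (x + dot N ω h))) *
          (∏ ω : Fin d → Bool, cnj (wt ω + 1) (f (Fin.cons true ω) ((x + h0) + dot N ω h))) := by
        refine Finset.sum_congr rfl fun x _ => ?_
        rw [Fintype.sum_prod_type]
        exact Finset.sum_congr rfl fun h0 _ => Finset.sum_congr rfl fun h _ => key x h0 h
    _ = ∑ x : ZMod N, ∑ h : Fin d → ZMod N, ∑ h0 : ZMod N,
          (∏ ω : Fin d → Bool, cnj (wt ω) (f (Fin.cons false ω) (x + dot N ω h))) *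
          (∏ ω : Fin d → Bool, cnj (wt ω + 1) (f (Fin.cons true ω) ((x + h0) + dot N ω h))) := by
        exact Finset.sum_congr rfl fun x _ => Finset.sum_comm
    _ = ∑ h : Fin d → ZMod N, ∑ x : ZMod N, ∑ h0 : ZMod N,
          (∏ ω : Fin d → Bool, cnj (wt ω) (f (Fin.cons false ω) (x + dot N ω h))) *
          (∏ ω : Fin d → Bool, cnj (wt ω + 1) (f (Fin.cons true ω) ((x + h0) + dot N ω h))) :=
        Finset.sum_comm
    _ = ∑ h : Fin d → ZMod N, Usum N d f h * Vsum N d f h := by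
        refine Finset.sum_congr rfl fun h _ => ?_
        rw [Usum, Finset.sum_mul]
        refine Finset.sum_congr rfl fun x _ => ?_
        rw [← Finset.mul_sum]
        congr 1
        rw [Vsum]
        exact Fintype.sum_equiv (Equiv.addLeft x) _ _ (fun h0 => rfl)

/-- replace the 0-th coordinate of the cube argument by `b` -/
def updf {d : ℕ} (f : (Fin (d+1) → Bool) → ZMod N → ℂ) (b : Bool) :
    (Fin (d+1) → Bool) → ZMod N → ℂ :=
  fun Ω => f (Function.update Ω 0 b)

lemma cnj_two (k : ℕ) (z : ℂ) : cnj (k + 2) z = cnj k z := by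
  unfold cnj
  simp [Nat.even_add, Nat.even_add_one]

lemma Usum_updf_false {d : ℕ} (f : (Fin (d+1) → Bool) → ZMod N → ℂ) (h : Fin d → ZMod N) :
    Usum N d (updf N f false) h = Usum N d f h := by
  unfold Usum updf
  simp [Fin.update_cons_zero]

lemma Vsum_updf_true {d : ℕ} (f : (Fin (d+1) → Bool) → ZMod N → ℂ) (h : Fin d → ZMod N) :
    Vsum N d (updf N f true) h = Vsum N d f h := by
  unfold Vsum updf
  simp [Fin.update_cons_zero]

lemma Vsum_updf_false {d : ℕ} (f : (Fin (d+1) → Bool) → ZMod N → ℂ) (h : Fin d → ZMod N) :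
    Vsum N d (updf N f false) h = (starRingEnd ℂ) (Usum N d f h) := by
  unfold Vsum updf Usum
  rw [map_sum]
  refine Finset.sum_congr rfl fun y _ => ?_
  rw [map_prod]
  refine Finset.prod_congr rfl fun ω _ => ?_
  rw [Fin.update_cons_zero, cnj_succ]

lemma Usum_updf_true {d : ℕ} (f : (Fin (d+1) → Bool) → ZMod N → ℂ) (h : Fin d → ZMod N) :
    Usum N d (updf N f true) h = (starRingEnd ℂ) (Vsum N d f h) := by
  unfold Vsum updf Usum
  rw [map_sum]
  refine Finset.sum_congr rfl fun y _ => ?_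
  rw [map_prod]
  refine Finset.prod_congr rfl fun ω _ => ?_
  beta_reduce
  rw [Fin.update_cons_zero, ← cnj_two (wt ω), cnj_succ (wt ω + 1)]

lemma gsum_updf_false {d : ℕ} (f : (Fin (d+1) → Bool) → ZMod N → ℂ) :
    gsum N (d+1) (updf N f false) = ((∑ h : Fin d → ZMod N, Complex.normSq (Usum N d f h) : ℝ) : ℂ) := by
  rw [gsum_split, Complex.ofReal_sum]
  refine Finset.sum_congr rfl fun h _ => ?_
  rw [Usum_updf_false, Vsum_updf_false, Complex.mul_conj]

lemma gsum_updf_true {d : ℕ} (f : (Fin (d+1) → Bool) → ZMod N → ℂ) :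
    gsum N (d+1) (updf N f true) = ((∑ h : Fin d → ZMod N, Complex.normSq (Vsum N d f h) : ℝ) : ℂ) := by
  rw [gsum_split, Complex.ofReal_sum]
  refine Finset.sum_congr rfl fun h _ => ?_
  rw [Usum_updf_true, Vsum_updf_true, mul_comm, Complex.mul_conj]

lemma cs_zero {d : ℕ} (f : (Fin (d+1) → Bool) → ZMod N → ℂ) :
    ‖gsum N (d+1) f‖ ^ 2 ≤
      ‖gsum N (d+1) (updf N f false)‖ * ‖gsum N (d+1) (updf N f true)‖ := by
  rw [gsum_split, gsum_updf_false, gsum_updf_true, Complex.norm_real, Real.norm_eq_abs, Complex.norm_real, Real.norm_eq_abs,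
    abs_of_nonneg (Finset.sum_nonneg fun h _ => Complex.normSq_nonneg _),
    abs_of_nonneg (Finset.sum_nonneg fun h _ => Complex.normSq_nonneg _)]
  calc ‖∑ h : Fin d → ZMod N, Usum N d f h * Vsum N d f h‖ ^ 2
      ≤ (∑ h : Fin d → ZMod N, ‖Usum N d f h‖ * ‖Vsum N d f h‖) ^ 2 := by
        refine pow_le_pow_left₀ (norm_nonneg _) ?_ 2
        refine le_trans (norm_sum_le _ _) (le_of_eq ?_)
        exact Finset.sum_congr rfl fun h _ => norm_mul _ _
    _ ≤ (∑ h : Fin d → ZMod N, ‖Usum N d f h‖ ^ 2) *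
        (∑ h : Fin d → ZMod N, ‖Vsum N d f h‖ ^ 2) :=
        Finset.sum_mul_sq_le_sq_mul_sq _ _ _
    _ = _ := by
        simp only [← Complex.normSq_eq_norm_sq]

lemma wt_comp {d : ℕ} (e : Equiv.Perm (Fin d)) (ω : Fin d → Bool) : wt (ω ∘ ⇑e) = wt ω :=
  Equiv.sum_comp e (fun j => if ω j then 1 else 0)

lemma dot_comp {d : ℕ} (e : Equiv.Perm (Fin d)) (ω : Fin d → Bool) (h : Fin d → ZMod N) :
    dot N (ω ∘ ⇑e) (h ∘ ⇑e) = dot N ω h :=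
  Equiv.sum_comp e (fun j => if ω j then h j else 0)

lemma gsum_perm {d : ℕ} (e : Equiv.Perm (Fin d)) (f : (Fin d → Bool) → ZMod N → ℂ) :
    gsum N d (fun ω => f (ω ∘ ⇑e)) = gsum N d f := by
  unfold gsum
  refine Finset.sum_congr rfl fun x _ => ?_
  refine (Fintype.sum_equiv (Equiv.arrowCongr e (Equiv.refl (ZMod N))) _ _ ?_).symm
  intro k
  have hk : (Equiv.arrowCongr e (Equiv.refl (ZMod N))) k = k ∘ ⇑e.symm := rfl
  rw [hk]
  refine Fintype.prod_equiv (Equiv.arrowCongr e (Equiv.refl Bool)) _ _ ?_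
  intro τ
  have hτ : (Equiv.arrowCongr e (Equiv.refl Bool)) τ = τ ∘ ⇑e.symm := rfl
  rw [hτ]
  have h1 : (τ ∘ ⇑e.symm) ∘ ⇑e = τ := by funext i; simp
  beta_reduce
  rw [h1, wt_comp e.symm τ, dot_comp N e.symm τ k]

def updfi {d : ℕ} (f : (Fin (d+1) → Bool) → ZMod N → ℂ) (i : Fin (d+1)) (b : Bool) :
    (Fin (d+1) → Bool) → ZMod N → ℂ :=
  fun Ω => f (Function.update Ω i b)

lemma cs_coord {d : ℕ} (f : (Fin (d+1) → Bool) → ZMod N → ℂ) (i : Fin (d+1)) :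
    ‖gsum N (d+1) f‖ ^ 2 ≤
      ‖gsum N (d+1) (updfi N f i false)‖ *
      ‖gsum N (d+1) (updfi N f i true)‖ := by
  set e : Equiv.Perm (Fin (d+1)) := Equiv.swap 0 i with he
  have he0 : e i = 0 := Equiv.swap_apply_right 0 i
  have hiff : ∀ j, e j = 0 ↔ j = i := by
    intro j
    constructor
    · intro hj; exact e.injective (hj.trans he0.symm)
    · rintro rfl; exact he0
  have key : ∀ b, updf N (fun ω => f (ω ∘ ⇑e)) b = fun Ω => (updfi N f i b) (Ω ∘ ⇑e) := by
    intro b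
    funext Ω
    have harg : (Function.update Ω 0 b) ∘ ⇑e = Function.update (Ω ∘ ⇑e) i b := by
      funext j
      by_cases hj : j = i
      · subst hj
        simp only [Function.comp_apply]
        rw [he0]
        simp
      · have hne : e j ≠ 0 := fun hc => hj ((hiff j).1 hc)
        simp only [Function.comp_apply, Function.update_of_ne hne, Function.update_of_ne hj]
    show f ((Function.update Ω 0 b) ∘ ⇑e) = f (Function.update (Ω ∘ ⇑e) i b)
    rw [harg]
  have hperm : gsum N (d+1) (fun ω => f (ω ∘ ⇑e)) = gsum N (d+1) f := gsum_perm N e f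
  calc ‖gsum N (d+1) f‖ ^ 2
      = ‖gsum N (d+1) (fun ω => f (ω ∘ ⇑e))‖ ^ 2 := by rw [hperm]
    _ ≤ ‖gsum N (d+1) (updf N (fun ω => f (ω ∘ ⇑e)) false)‖ *
        ‖gsum N (d+1) (updf N (fun ω => f (ω ∘ ⇑e)) true)‖ := cs_zero N _
    _ = ‖gsum N (d+1) (updfi N f i false)‖ *
        ‖gsum N (d+1) (updfi N f i true)‖ := by
        rw [key false, key true, gsum_perm N e (updfi N f i false),
          gsum_perm N e (updfi N f i true)]

def fixf {d : ℕ} (f : (Fin d → Bool) → ZMod N → ℂ) (k : ℕ) (τ : Fin k → Bool) :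
    (Fin d → Bool) → ZMod N → ℂ :=
  fun Ω => f (fun i => if hik : (i : ℕ) < k then τ ⟨i, hik⟩ else Ω i)

lemma fixf_zero {d : ℕ} (f : (Fin d → Bool) → ZMod N → ℂ) (τ : Fin 0 → Bool) :
    fixf N f 0 τ = f := by
  funext Ω z
  unfold fixf
  congr 1

lemma fixf_succ {d k : ℕ} (hk : k < d + 1) (f : (Fin (d+1) → Bool) → ZMod N → ℂ)
    (τ : Fin k → Bool) (b : Bool) :
    updfi N (fixf N f k τ) ⟨k, hk⟩ b = fixf N f (k+1) (Fin.snoc τ b) := by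
  funext Ω z
  show fixf N f k τ (Function.update Ω ⟨k, hk⟩ b) z = _
  unfold fixf
  congr 1
  funext i
  by_cases h1 : (i : ℕ) < k
  · rw [dif_pos h1, dif_pos (Nat.lt_succ_of_lt h1)]
    have : (⟨(i : ℕ), Nat.lt_succ_of_lt h1⟩ : Fin (k+1)) = Fin.castSucc ⟨(i : ℕ), h1⟩ := rfl
    rw [this, Fin.snoc_castSucc]
  · by_cases h2 : (i : ℕ) = k
    · rw [dif_neg h1, dif_pos (by omega : (i:ℕ) < k + 1)]
      simp [Fin.snoc, h2, Function.update_apply, Fin.ext_iff]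
    · rw [dif_neg h1, dif_neg (by omega : ¬ (i:ℕ) < k + 1)]
      simp [Function.update_apply, Fin.ext_iff, h2]

lemma fixf_top {d : ℕ} (f : (Fin d → Bool) → ZMod N → ℂ) (τ : Fin d → Bool) :
    fixf N f d τ = fun _ => f τ := by
  funext Ω z
  unfold fixf
  congr 2
  funext i
  rw [dif_pos i.isLt]

lemma prod_snoc {k : ℕ} (F : (Fin (k+1) → Bool) → ℝ) :
    ∏ τ' : Fin (k+1) → Bool, F τ' =
      ∏ τ : Fin k → Bool, (F (Fin.snoc τ false) * F (Fin.snoc τ true)) := by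
  rw [Fintype.prod_equiv (Fin.snocEquiv (fun _ => Bool)).symm F
    (fun p => F (Fin.snoc p.2 p.1)) (fun τ' => by
      congr 1
      exact (Fin.snoc_init_self τ').symm),
    Fintype.prod_prod_type, Fintype.prod_bool, mul_comm, ← Finset.prod_mul_distrib]

lemma gcs_iter {d : ℕ} (f : (Fin (d+1) → Bool) → ZMod N → ℂ) (k : ℕ) (hk : k ≤ d + 1) :
    ‖gsum N (d+1) f‖ ^ (2 ^ k) ≤
      ∏ τ : Fin k → Bool, ‖gsum N (d+1) (fixf N f k τ)‖ := by
  induction k with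
  | zero =>
      rw [pow_zero, pow_one, Fintype.prod_unique]
      rw [fixf_zero]
  | succ k ih =>
      have hk' : k < d + 1 := hk
      have h1 := ih (le_of_lt hk')
      calc ‖gsum N (d+1) f‖ ^ (2 ^ (k+1))
          = (‖gsum N (d+1) f‖ ^ (2 ^ k)) ^ 2 := by
            rw [← pow_mul, pow_succ]
        _ ≤ (∏ τ : Fin k → Bool, ‖gsum N (d+1) (fixf N f k τ)‖) ^ 2 := by
            refine pow_le_pow_left₀ (by positivity) h1 2
        _ = ∏ τ : Fin k → Bool, ‖gsum N (d+1) (fixf N f k τ)‖ ^ 2 := by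
            rw [Finset.prod_pow]
        _ ≤ ∏ τ : Fin k → Bool,
              (‖gsum N (d+1) (updfi N (fixf N f k τ) ⟨k, hk'⟩ false)‖ *
               ‖gsum N (d+1) (updfi N (fixf N f k τ) ⟨k, hk'⟩ true)‖) := by
            refine Finset.prod_le_prod (fun τ _ => by positivity) (fun τ _ => cs_coord N _ _)
        _ = ∏ τ : Fin (k+1) → Bool, ‖gsum N (d+1) (fixf N f (k+1) τ)‖ := by
            rw [prod_snoc]
            refine Finset.prod_congr rfl fun τ _ => ?_
            rw [fixf_succ N hk' f τ false, fixf_succ N hk' f τ true]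

lemma cnj_conj (k : ℕ) (z : ℂ) : cnj k ((starRingEnd ℂ) z) = (starRingEnd ℂ) (cnj k z) := by
  unfold cnj; split <;> simp

lemma cnj_mul (k : ℕ) (z w : ℂ) : cnj k (z * w) = cnj k z * cnj k w := by
  unfold cnj; split <;> simp

/-- The multiplicative derivative. -/
noncomputable def ddiff (h0 : ZMod N) (a : ZMod N → ℂ) : ZMod N → ℂ :=
  fun n => a (n + h0) * (starRingEnd ℂ) (a n)

lemma gsum_succ_const (d : ℕ) (a : ZMod N → ℂ) :
    gsum N (d+2) (fun _ => a) =
      ∑ h0 : ZMod N, (starRingEnd ℂ) (gsum N (d+1) (fun _ => ddiff N h0 a)) := by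
  have key : ∀ (x h0 : ZMod N) (h : Fin (d+1) → ZMod N),
      (∏ Ω : Fin (d+2) → Bool, cnj (wt Ω) (a (x + dot N Ω (Fin.cons h0 h)))) =
      (starRingEnd ℂ) (∏ ω : Fin (d+1) → Bool,
        cnj (wt ω) (ddiff N h0 a (x + dot N ω h))) := by
    intro x h0 h
    rw [prod_cube_split, map_prod]
    rw [← Finset.prod_mul_distrib]
    refine Fintype.prod_congr _ _ fun ω => ?_
    have h1 : wt (Fin.cons false ω) = wt ω := by rw [wt_cons]; simp
    have h2 : dot N (Fin.cons false ω) (Fin.cons h0 h) = dot N ω h := by rw [dot_cons]; simp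
    have h3 : wt (Fin.cons true ω) = wt ω + 1 := by rw [wt_cons]; simp [add_comm]
    have h4 : dot N (Fin.cons true ω) (Fin.cons h0 h) = h0 + dot N ω h := by rw [dot_cons]; simp
    rw [h1, h2, h3, h4, ← cnj_succ (wt ω), ddiff, cnj_mul, cnj_conj, ← cnj_succ (wt ω + 1),
      cnj_two]
    have h5 : x + dot N ω h + h0 = x + (h0 + dot N ω h) := by ring
    rw [h5, mul_comm]
  calc gsum N (d+2) (fun _ => a)
      = ∑ x : ZMod N, ∑ p : ZMod N × (Fin (d+1) → ZMod N),
          ∏ Ω : Fin (d+2) → Bool, cnj (wt Ω) (a (x + dot N Ω (Fin.cons p.1 p.2))) := by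
        rw [gsum]
        refine Finset.sum_congr rfl fun x _ => ?_
        exact (Fintype.sum_equiv (Fin.consEquiv fun _ => ZMod N)
          (fun p => ∏ Ω : Fin (d+2) → Bool, cnj (wt Ω) (a (x + dot N Ω (Fin.cons p.1 p.2))))
          _ (fun p => rfl)).symm
    _ = ∑ x : ZMod N, ∑ h0 : ZMod N, ∑ h : Fin (d+1) → ZMod N,
          (starRingEnd ℂ) (∏ ω : Fin (d+1) → Bool,
            cnj (wt ω) (ddiff N h0 a (x + dot N ω h))) := by
        refine Finset.sum_congr rfl fun x _ => ?_
        rw [Fintype.sum_prod_type]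
        exact Finset.sum_congr rfl fun h0 _ => Finset.sum_congr rfl fun h _ => key x h0 h
    _ = ∑ h0 : ZMod N, (starRingEnd ℂ) (gsum N (d+1) (fun _ => ddiff N h0 a)) := by
        rw [Finset.sum_comm]
        refine Finset.sum_congr rfl fun h0 _ => ?_
        rw [gsum, map_sum]
        refine Finset.sum_congr rfl fun x _ => ?_
        rw [map_sum]

/-- The real value of the Gowers sum of the constant family. -/
noncomputable def Greal (d : ℕ) (g : ZMod N → ℂ) : ℝ := (gsum N d (fun _ => g)).re

lemma gsum_const_eq_re (d : ℕ) (g : ZMod N → ℂ) :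
    gsum N (d+1) (fun _ => g) =
      ((∑ h : Fin d → ZMod N, Complex.normSq (Usum N d (fun _ => g) h) : ℝ) : ℂ) :=
  gsum_updf_false N (fun _ => g)

lemma gsum_const_ofReal (d : ℕ) (g : ZMod N → ℂ) :
    gsum N (d+1) (fun _ => g) = ((Greal N (d+1) g : ℝ) : ℂ) := by
  rw [Greal, gsum_const_eq_re, Complex.ofReal_re]

lemma Greal_nonneg (d : ℕ) (g : ZMod N → ℂ) : 0 ≤ Greal N (d+1) g := by
  rw [Greal, gsum_const_eq_re, Complex.ofReal_re]
  exact Finset.sum_nonneg fun h _ => Complex.normSq_nonneg _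

lemma abs_gsum_const (d : ℕ) (g : ZMod N → ℂ) :
    ‖gsum N (d+1) (fun _ => g)‖ = Greal N (d+1) g := by
  rw [gsum_const_ofReal, Complex.norm_real, Real.norm_eq_abs, abs_of_nonneg (Greal_nonneg N d g)]

lemma Greal_succ (d : ℕ) (a : ZMod N → ℂ) :
    Greal N (d+2) a = ∑ h0 : ZMod N, Greal N (d+1) (ddiff N h0 a) := by
  rw [Greal, gsum_succ_const, Complex.re_sum]
  refine Finset.sum_congr rfl fun h0 _ => ?_
  rw [gsum_const_ofReal, Complex.conj_ofReal, Complex.ofReal_re]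


lemma Greal_one (g : ZMod N → ℂ) : Greal N 1 g = Complex.normSq (∑ x : ZMod N, g x) := by
  have husum : ∀ h : Fin 0 → ZMod N, Usum N 0 (fun _ => g) h = ∑ x : ZMod N, g x := by
    intro h
    rw [Usum]
    refine Finset.sum_congr rfl fun x _ => ?_
    rw [Fintype.prod_unique]
    simp [wt, dot, cnj]
  rw [Greal, gsum_const_eq_re, Complex.ofReal_re, Fintype.sum_unique, husum]

lemma pow2_cancel1 {X : ℝ} (hX : 0 ≤ X) (k : ℕ) :
    (X ^ (2^k : ℕ)) ^ (((2:ℝ)^k)⁻¹) = X := by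
  have h : ((2:ℝ)^k) = ((2^k : ℕ) : ℝ) := by push_cast; ring
  rw [h, Real.pow_rpow_inv_natCast hX (by positivity)]

lemma pow2_cancel2 {X : ℝ} (hX : 0 ≤ X) (k : ℕ) :
    (X ^ (((2:ℝ)^k)⁻¹)) ^ (2^k : ℕ) = X := by
  have h : ((2:ℝ)^k) = ((2^k : ℕ) : ℝ) := by push_cast; ring
  rw [h, Real.rpow_inv_natCast_pow hX (by positivity)]

lemma norm_eq (d : ℕ) (a : ZMod N → ℂ) :
    gowersNorm N (d+1) a = (Greal N (d+1) a / (N:ℝ)^(d+2)) ^ (((2:ℝ) ^ (d+1))⁻¹) := by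
  induction d generalizing a with
  | zero =>
      have h1 : gowersNorm N 1 a = ‖(∑ n : ZMod N, a n) / (N : ℂ)‖ := rfl
      rw [h1, Greal_one, norm_div, Complex.norm_natCast]
      have hN : (0:ℝ) < (N:ℝ) := by
        have := Nat.pos_of_ne_zero (NeZero.ne N)
        exact_mod_cast this
      have h2 : Complex.normSq (∑ x : ZMod N, a x) / (N:ℝ)^(0+2) =
          (‖∑ n : ZMod N, a n‖ / (N:ℝ)) ^ (2^1 : ℕ) := by
        rw [div_pow, ← Complex.sq_norm]
        norm_num
      rw [h2, pow2_cancel1 (by positivity) 1]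
  | succ d ih =>
      have h1 : gowersNorm N (d+2) a =
          ((∑ h : ZMod N, (gowersNorm N (d + 1) (ddiff N h a)) ^ (2 ^ (d + 1)))
            / (N : ℝ)) ^ (((2 : ℝ) ^ (d + 2))⁻¹) := rfl
      rw [h1]
      have h2 : ∀ h : ZMod N, (gowersNorm N (d + 1) (ddiff N h a)) ^ (2 ^ (d + 1) : ℕ) =
          Greal N (d+1) (ddiff N h a) / (N:ℝ)^(d+2) := by
        intro h
        rw [ih, pow2_cancel2 (div_nonneg (Greal_nonneg N d _) (by positivity)) (d+1)]
      have h3 : (∑ h : ZMod N, (gowersNorm N (d + 1) (ddiff N h a)) ^ (2 ^ (d + 1) : ℕ))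
          = Greal N (d+2) a / (N:ℝ)^(d+2) := by
        rw [Greal_succ, Finset.sum_div]
        exact Finset.sum_congr rfl fun h _ => h2 h
      rw [h3, div_div, ← pow_succ]

lemma gcs_const {d : ℕ} (f : (Fin (d+1) → Bool) → ZMod N → ℂ) :
    ‖gsum N (d+1) f‖ ^ (2^(d+1) : ℕ) ≤
      ∏ τ : Fin (d+1) → Bool, Greal N (d+1) (f τ) := by
  refine (gcs_iter N f (d+1) le_rfl).trans (le_of_eq ?_)
  refine Finset.prod_congr rfl fun τ _ => ?_
  rw [fixf_top, abs_gsum_const]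

lemma gsum_add_expand (d : ℕ) (a b : ZMod N → ℂ) :
    gsum N d (fun _ => a + b) =
      ∑ t ∈ (Finset.univ : Finset (Fin d → Bool)).powerset,
        gsum N d (fun ω => if ω ∈ t then a else b) := by
  have key : ∀ (x : ZMod N) (h : Fin d → ZMod N),
      (∏ ω : Fin d → Bool, cnj (wt ω) ((a + b) (x + dot N ω h))) =
      ∑ t ∈ (Finset.univ : Finset (Fin d → Bool)).powerset,
        ∏ ω : Fin d → Bool, cnj (wt ω) ((if ω ∈ t then a else b) (x + dot N ω h)) := by
    intro x h
    have h1 : ∀ ω : Fin d → Bool, cnj (wt ω) ((a + b) (x + dot N ω h)) =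
        cnj (wt ω) (a (x + dot N ω h)) + cnj (wt ω) (b (x + dot N ω h)) := by
      intro ω; rw [Pi.add_apply, cnj_add]
    rw [Fintype.prod_congr _ _ h1, Finset.prod_add]
    refine Finset.sum_congr rfl fun t ht => ?_
    have h2 : ∀ ω : Fin d → Bool, cnj (wt ω) ((if ω ∈ t then a else b) (x + dot N ω h)) =
        if ω ∈ t then cnj (wt ω) (a (x + dot N ω h)) else cnj (wt ω) (b (x + dot N ω h)) := by
      intro ω
      by_cases hω : ω ∈ t <;> simp [hω]
    rw [Fintype.prod_congr _ _ h2, Finset.prod_ite, Finset.filter_univ_mem]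
    congr 1
    congr 1
    ext ω
    simp
  rw [gsum]
  calc (∑ x : ZMod N, ∑ h : Fin d → ZMod N,
        ∏ ω : Fin d → Bool, cnj (wt ω) ((a + b) (x + dot N ω h)))
      = ∑ x : ZMod N, ∑ h : Fin d → ZMod N,
          ∑ t ∈ (Finset.univ : Finset (Fin d → Bool)).powerset,
            ∏ ω : Fin d → Bool, cnj (wt ω) ((if ω ∈ t then a else b) (x + dot N ω h)) := by
        exact Finset.sum_congr rfl fun x _ => Finset.sum_congr rfl fun h _ => key x h
    _ = ∑ x : ZMod N, ∑ t ∈ (Finset.univ : Finset (Fin d → Bool)).powerset,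
          ∑ h : Fin d → ZMod N,
            ∏ ω : Fin d → Bool, cnj (wt ω) ((if ω ∈ t then a else b) (x + dot N ω h)) := by
        exact Finset.sum_congr rfl fun x _ => Finset.sum_comm
    _ = ∑ t ∈ (Finset.univ : Finset (Fin d → Bool)).powerset,
          gsum N d (fun ω => if ω ∈ t then a else b) := by
        rw [Finset.sum_comm]
        exact Finset.sum_congr rfl fun t _ => rfl

lemma Greal_add_le (d : ℕ) (a b : ZMod N → ℂ) :
    Greal N (d+1) (a+b) ≤
      ((Greal N (d+1) a) ^ (((2:ℝ)^(d+1))⁻¹) + (Greal N (d+1) b) ^ (((2:ℝ)^(d+1))⁻¹))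
        ^ (2^(d+1) : ℕ) := by
  set M : ℕ := 2^(d+1) with hM
  set α := (Greal N (d+1) a) ^ (((2:ℝ)^(d+1))⁻¹) with hαdef
  set β := (Greal N (d+1) b) ^ (((2:ℝ)^(d+1))⁻¹) with hβdef
  have hα : 0 ≤ α := Real.rpow_nonneg (Greal_nonneg N d a) _
  have hβ : 0 ≤ β := Real.rpow_nonneg (Greal_nonneg N d b) _
  have hαM : α ^ M = Greal N (d+1) a := pow2_cancel2 (Greal_nonneg N d a) (d+1)
  have hβM : β ^ M = Greal N (d+1) b := pow2_cancel2 (Greal_nonneg N d b) (d+1)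
  have hcard : Fintype.card (Fin (d+1) → Bool) = M := by
    rw [hM]; simp
  -- step 2 : bound each term
  have step2 : ∀ t ∈ (Finset.univ : Finset (Fin (d+1) → Bool)).powerset,
      ‖gsum N (d+1) (fun ω => if ω ∈ t then a else b)‖ ≤
        α ^ t.card * β ^ (M - t.card) := by
    intro t _
    have h1 := gcs_const N (fun ω => if ω ∈ t then a else b)
    have h2 : (∏ τ : Fin (d+1) → Bool, Greal N (d+1) (if τ ∈ t then a else b)) =
        (Greal N (d+1) a) ^ t.card * (Greal N (d+1) b) ^ (M - t.card) := by
      have h3 : ∀ τ : Fin (d+1) → Bool, Greal N (d+1) (if τ ∈ t then a else b) =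
          if τ ∈ t then Greal N (d+1) a else Greal N (d+1) b := fun τ =>
        apply_ite (Greal N (d+1)) _ a b
      rw [Fintype.prod_congr _ _ h3, Finset.prod_ite, Finset.filter_univ_mem,
        Finset.prod_const, Finset.prod_const]
      congr 2
      have h4 : Finset.univ.filter (fun τ => ¬ τ ∈ t) = Finset.univ \ t := by
        ext τ; simp
      rw [h4, Finset.card_univ_diff, hcard]
    rw [h2] at h1
    have h5 : (Greal N (d+1) a) ^ t.card * (Greal N (d+1) b) ^ (M - t.card) =
        (α ^ t.card * β ^ (M - t.card)) ^ M := by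
      rw [← hαM, ← hβM]; ring
    rw [h5] at h1
    have hMne : M ≠ 0 := by rw [hM]; positivity
    exact (pow_le_pow_iff_left₀ (norm_nonneg _)
      (mul_nonneg (pow_nonneg hα _) (pow_nonneg hβ _)) hMne).mp h1
  -- step 1 + 3
  calc Greal N (d+1) (a+b)
      = ‖gsum N (d+1) (fun _ => a + b)‖ := (abs_gsum_const N d (a+b)).symm
    _ ≤ ∑ t ∈ (Finset.univ : Finset (Fin (d+1) → Bool)).powerset,
          ‖gsum N (d+1) (fun ω => if ω ∈ t then a else b)‖ := by
        rw [gsum_add_expand]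
        exact norm_sum_le _ _
    _ ≤ ∑ t ∈ (Finset.univ : Finset (Fin (d+1) → Bool)).powerset,
          α ^ t.card * β ^ (M - t.card) := Finset.sum_le_sum step2
    _ = (α + β) ^ M := by
        have := Finset.prod_add (fun _ : Fin (d+1) → Bool => α) (fun _ => β) Finset.univ
        rw [Finset.prod_const, Finset.card_univ, hcard] at this
        rw [this]
        refine Finset.sum_congr rfl fun t _ => ?_
        rw [Finset.prod_const, Finset.prod_const, Finset.card_univ_diff, hcard]

/-- Triangle inequality for the Gowers uniformity norms: for all `d ≥ 1`,
`‖a+b‖_{U^d} ≤ ‖a‖_{U^d} + ‖b‖_{U^d}`. -/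
theorem gowersNorm_add_le (N : ℕ) [NeZero N] (a b : ZMod N → ℂ) (d : ℕ) (hd : 1 ≤ d) :
    gowersNorm N d (a + b) ≤ gowersNorm N d a + gowersNorm N d b := by
  obtain ⟨e, rfl⟩ : ∃ e, d = e + 1 := ⟨d - 1, by omega⟩
  rw [norm_eq, norm_eq, norm_eq]
  have hN : (0:ℝ) < (N:ℝ) := by exact_mod_cast Nat.pos_of_ne_zero (NeZero.ne N)
  set K : ℝ := (N:ℝ)^(e+2) with hK
  have hK0 : 0 < K := by positivity
  set ε : ℝ := ((2:ℝ)^(e+1))⁻¹ with hε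
  have hε0 : 0 ≤ ε := by positivity
  set α := (Greal N (e+1) a) ^ ε with hαdef
  set β := (Greal N (e+1) b) ^ ε with hβdef
  have hα : 0 ≤ α := Real.rpow_nonneg (Greal_nonneg N e a) _
  have hβ : 0 ≤ β := Real.rpow_nonneg (Greal_nonneg N e b) _
  have h1 : (Greal N (e+1) (a+b) / K) ^ ε ≤ (((α + β) ^ (2^(e+1) : ℕ)) / K) ^ ε := by
    refine Real.rpow_le_rpow (div_nonneg (Greal_nonneg N e _) hK0.le) ?_ hε0
    gcongr
    exact Greal_add_le N e a b
  have h2 : (((α + β) ^ (2^(e+1) : ℕ)) / K) ^ ε = (α + β) / K ^ ε := by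
    rw [Real.div_rpow (pow_nonneg (add_nonneg hα hβ) _) hK0.le,
      pow2_cancel1 (add_nonneg hα hβ) (e+1)]
  have h3 : (Greal N (e+1) a / K) ^ ε = α / K ^ ε := by
    rw [Real.div_rpow (Greal_nonneg N e a) hK0.le]
  have h4 : (Greal N (e+1) b / K) ^ ε = β / K ^ ε := by
    rw [Real.div_rpow (Greal_nonneg N e b) hK0.le]
  rw [h3, h4]
  refine (h1.trans_eq h2).trans_eq ?_
  rw [add_div]
end

section
/- Let $(X,\mathcal{X},\mu,T)$ be an invertible measure preserving system, $k \in \mathbb{N}$, and let $f_\epsilon \in L^\infty(\mu)$ for each $\epsilon \in \{0,1\}^k \setminus \{0\}$ be bounded by 1. Let $b_1,\dots,b_k: \mathbb{N}\to\mathbb{C}$ satisfy $b_i(n)/n^c \to 0$ for all $c>0$ and $\frac{1}{N}\sum_{n=1}^{N}|b_i(n)| \leq 1$ for all $N$. Then for each $1 \leq j \leq k$, $\left\|\frac{1}{N^k}\sum_{1\leq n_1,\dots,n_k\leq N}\prod_{i=1}^{k}b_i(n_i)\prod_{\epsilon\in\{0,1\}^k_*}T^{\epsilon_1 n_1+\dots+\epsilon_k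 n_k}f_\epsilon\right\|_{L^2(\mu)} \leq C_k\left(\|b_j \cdot \mathbf{1}_{[1,N]}\|_{U^2(\mathbb{Z}_{2N})} + o_N(1)\right)$, where $C_k$ depends only on $k$ and the $o_N(1)$ term depends only on the sequences $b_1,\dots,b_k$. -/
open Filter MeasureTheory

/-- The Gowers uniformity norm `U^d` on `ℤ/Nℤ`, for functions given on the
representatives `{0,…,N-1}` (addition taken mod `N`). The value at `d = 0` is junk. -/
noncomputable def gowersNormNat (N : ℕ) : ℕ → (ℕ → ℂ) → ℝ
  | 0, _ => 0
  | 1, a => ‖(∑ n ∈ Finset.range N, a n) / (N : ℂ)‖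
  | (d + 2), a =>
      ((∑ h ∈ Finset.range N,
        (gowersNormNat N (d + 1) (fun n => a ((n + h) % N) * (starRingEnd ℂ) (a (n % N))))
          ^ (2 ^ (d + 1))) / (N : ℝ)) ^ (((2 : ℝ) ^ (d + 2))⁻¹)

open Finset Function

local notation "conj'" => starRingEnd ℂ

noncomputable def Complex.abs : AbsoluteValue ℂ ℝ where
  toFun z := ‖z‖
  map_mul' := norm_mul
  nonneg' := norm_nonneg
  eq_zero' _ := norm_eq_zero
  add_le' := norm_add_le

lemma Complex.norm_eq_abs (z : ℂ) : ‖z‖ = Complex.abs z := rfl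

lemma Complex.abs_conj (z : ℂ) : Complex.abs (conj' z) = Complex.abs z := Complex.norm_conj z

lemma Complex.abs_natCast (n : ℕ) : Complex.abs (n : ℂ) = n := Complex.norm_natCast n

lemma Complex.abs_exp_ofReal_mul_I (x : ℝ) : Complex.abs (Complex.exp (x * Complex.I)) = 1 :=
  Complex.norm_exp_ofReal_mul_I x

lemma Complex.normSq_eq_abs (z : ℂ) : Complex.normSq z = Complex.abs z ^ 2 :=
  Complex.normSq_eq_norm_sq z

lemma Complex.sq_abs (z : ℂ) : Complex.abs z ^ 2 = Complex.normSq z := Complex.sq_norm z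


lemma mod_shift_cancel {M m n : ℕ} (hm : m < M) (hn : n < M) :
    (m + (n + (M - m)) % M) % M = n := by
  rw [Nat.add_mod_mod]
  have h1 : m + (n + (M - m)) = n + M := by omega
  rw [h1, Nat.add_mod_right, Nat.mod_eq_of_lt hn]

lemma mod_shift_cancel' {M m h : ℕ} (hm : m < M) (hh : h < M) :
    ((m + h) % M + (M - m)) % M = h := by
  rw [Nat.mod_add_mod]
  have h1 : m + h + (M - m) = h + M := by omega
  rw [h1, Nat.add_mod_right, Nat.mod_eq_of_lt hh]

lemma sum_shift_mod (M : ℕ) (hM : 0 < M) (m : ℕ) (hm : m < M) (g : ℕ → ℂ) :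
    ∑ n ∈ range M, g n = ∑ h ∈ range M, g ((m + h) % M) := by
  apply Finset.sum_nbij' (i := fun n => (n + (M - m)) % M) (j := fun h => (m + h) % M)
  · intro n _; exact mem_range.mpr (Nat.mod_lt _ hM)
  · intro h _; exact mem_range.mpr (Nat.mod_lt _ hM)
  · intro n hn; exact mod_shift_cancel hm (mem_range.mp hn)
  · intro h hh; exact mod_shift_cancel' hm (mem_range.mp hh)
  · intro n hn
    rw [mod_shift_cancel hm (mem_range.mp hn)]

lemma conj_eq_inv {z : ℂ} (hz : Complex.abs z = 1) : conj' z = z⁻¹ := by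
  have h : z * conj' z = 1 := by
    rw [Complex.mul_conj]
    norm_cast
    rw [Complex.normSq_eq_abs, hz]; norm_num
  field_simp [show z ≠ 0 from fun h0 => by simp [h0] at hz]
  linear_combination h

lemma zpow_wrap {z : ℂ} (hz : Complex.abs z = 1) {m h M : ℕ} (hmh : M ≤ m + h) (hm : m < M) (hh : h < M) :
    z ^ ((m + h) % M) * (z⁻¹) ^ m = z ^ h * (z ^ M)⁻¹ := by
  have hz0 : z ≠ 0 := fun h0 => by simp [h0] at hz
  have hmod : (m + h) % M = m + h - M := by
    rw [Nat.mod_eq_sub_mod hmh, Nat.mod_eq_of_lt (by omega)]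
  rw [hmod, pow_sub₀ z hz0 hmh, pow_add, inv_pow]
  field_simp

lemma zpow_nowrap {z : ℂ} (hz : Complex.abs z = 1) {m h M : ℕ} (hmh : m + h < M) :
    z ^ ((m + h) % M) * (z⁻¹) ^ m = z ^ h := by
  have hz0 : z ≠ 0 := fun h0 => by simp [h0] at hz
  rw [Nat.mod_eq_of_lt hmh, pow_add, inv_pow]
  field_simp

lemma step1 (N : ℕ) (hN : 0 < N) (a : ℕ → ℂ)
    (ha : ∀ n, a n ≠ 0 → 1 ≤ n ∧ n ≤ N) (z : ℂ) (hz : Complex.abs z = 1) :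
    (∑ n ∈ range (2*N), a n * z ^ n) * conj' (∑ m ∈ range (2*N), a m * z ^ m)
      = ∑ h ∈ range (2*N), (if h < N then z ^ h else z ^ h * (z ^ (2*N))⁻¹) *
          (∑ m ∈ range (2*N), a ((m + h) % (2*N)) * conj' (a m)) := by
  set M := 2*N with hM
  have hM0 : 0 < M := by omega
  rw [map_sum, Finset.sum_mul_sum]
  -- now: ∑ n ∑ m, (a n * z^n) * conj'(a m * z^m)
  rw [Finset.sum_comm]
  -- ∑ m ∑ n
  have : ∀ m ∈ range M,
      ∑ n ∈ range M, (a n * z ^ n) * conj' (a m * z ^ m)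
        = ∑ h ∈ range M, (if h < N then z ^ h else z ^ h * (z ^ M)⁻¹) *
            (a ((m + h) % M) * conj' (a m)) := by
    intro m hm
    rw [sum_shift_mod M hM0 m (mem_range.mp hm) (fun n => (a n * z ^ n) * conj' (a m * z ^ m))]
    apply Finset.sum_congr rfl
    intro h hh
    rcases eq_or_ne (a ((m + h) % M) * conj' (a m)) 0 with h0 | h0
    · rw [map_mul]
      rcases mul_eq_zero.mp h0 with h1 | h1 <;> simp [h1] <;> ring
    · have ham : a m ≠ 0 := fun hc => by simp [hc] at h0
      have hamh : a ((m + h) % M) ≠ 0 := fun hc => by simp [hc] at h0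
      obtain ⟨hm1, hm2⟩ := ha m ham
      obtain ⟨hn1, hn2⟩ := ha _ hamh
      rw [map_mul, map_pow, conj_eq_inv hz]
      have hmM : m < M := mem_range.mp hm
      have hhM : h < M := mem_range.mp hh
      rcases lt_or_ge (m + h) M with hc | hc
      · have hhN : h < N := by
          rw [Nat.mod_eq_of_lt hc] at hn2; omega
        rw [if_pos hhN, ← zpow_nowrap hz hc]
        ring
      · have hhN : ¬ (h < N) := by
          have : (m + h) % M = m + h - M := by
            rw [Nat.mod_eq_sub_mod hc, Nat.mod_eq_of_lt (by omega)]
          rw [this] at hn1; omega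
        rw [if_neg hhN, ← zpow_wrap hz hc (mem_range.mp hm) (mem_range.mp hh)]
        ring
  rw [Finset.sum_congr rfl this, Finset.sum_comm]
  apply Finset.sum_congr rfl
  intro h _
  rw [Finset.mul_sum]

lemma gowers2_def (M : ℕ) (a : ℕ → ℂ) :
    gowersNormNat M 2 a =
      ((∑ h ∈ range M,
        (gowersNormNat M 1 (fun n => a ((n + h) % M) * conj' (a (n % M)))) ^ (2:ℕ)) / (M : ℝ))
        ^ (((2:ℝ) ^ (2:ℕ))⁻¹) := by
  rfl

lemma gowers1_def (M : ℕ) (a : ℕ → ℂ) :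
    gowersNormNat M 1 a = Complex.abs ((∑ n ∈ Finset.range M, a n) / (M : ℂ)) := rfl

lemma gowers2_nonneg (M : ℕ) (a : ℕ → ℂ) : 0 ≤ gowersNormNat M 2 a := by
  rw [gowers2_def]
  apply Real.rpow_nonneg
  apply div_nonneg _ (Nat.cast_nonneg M)
  exact Finset.sum_nonneg fun h _ => pow_nonneg (by rw [gowers1_def]; positivity) _

lemma gowers2_pow_four (M : ℕ) (hM : 0 < M) (a : ℕ → ℂ) :
    (gowersNormNat M 2 a) ^ (4:ℕ)
      = (∑ h ∈ range M,
          (Complex.abs (∑ n ∈ range M, a ((n + h) % M) * conj' (a n)) / M) ^ (2:ℕ)) / M := by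
  rw [gowers2_def]
  have hbase : (0:ℝ) ≤ (∑ h ∈ range M,
      (gowersNormNat M 1 (fun n => a ((n + h) % M) * conj' (a (n % M)))) ^ (2:ℕ)) / (M : ℝ) := by
    apply div_nonneg _ (Nat.cast_nonneg M)
    exact Finset.sum_nonneg fun h _ => pow_nonneg (by rw [gowers1_def]; positivity) _
  rw [← Real.rpow_natCast (_ ^ (((2:ℝ)^(2:ℕ))⁻¹)) 4, ← Real.rpow_mul hbase]
  norm_num
  congr 1
  apply Finset.sum_congr rfl
  intro h _
  congr 1
  rw [gowers1_def]
  rw [map_div₀]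
  congr 2
  · apply Finset.sum_congr rfl
    intro n hn
    rw [Nat.mod_eq_of_lt (mem_range.mp hn)]
  · simp [Complex.abs_natCast]

lemma fourier_le_gowers (N : ℕ) (hN : 0 < N) (a : ℕ → ℂ)
    (ha : ∀ n, a n ≠ 0 → 1 ≤ n ∧ n ≤ N) (z : ℂ) (hz : Complex.abs z = 1) :
    Complex.abs (∑ n ∈ range (2*N), a n * z ^ n)
      ≤ (2*N : ℝ) * gowersNormNat (2*N) 2 a := by
  have hstep := step1 N hN a ha z hz
  set M := 2*N with hMdef
  have hM0 : 0 < M := by omega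
  set G := gowersNormNat M 2 a with hG
  have hG0 : 0 ≤ G := gowers2_nonneg M a
  set S := ∑ n ∈ range M, a n * z ^ n with hS
  set c : ℕ → ℝ := fun h => Complex.abs (∑ m ∈ range M, a ((m + h) % M) * conj' (a m)) with hc
  have hcnn : ∀ h, 0 ≤ c h := fun h => AbsoluteValue.nonneg _ _
  have h2 : Complex.abs S ^ 2 ≤ ∑ h ∈ range M, c h := by
    have e1 : Complex.abs S ^ 2 = Complex.abs (S * conj' S) := by
      rw [map_mul, Complex.abs_conj, sq]
    rw [e1, hstep]
    refine le_trans (Complex.abs.sum_le _ _) (le_of_eq (Finset.sum_congr rfl ?_))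
    intro h _
    rw [map_mul]
    have : Complex.abs (if h < N then z ^ h else z ^ h * (z ^ M)⁻¹) = 1 := by
      split <;> simp [map_mul, map_pow, map_inv₀, hz]
    rw [this, one_mul]
  have h3 : (∑ h ∈ range M, c h) ^ 2 ≤ (M:ℝ) * ∑ h ∈ range M, c h ^ 2 := by
    have := Finset.sum_mul_sq_le_sq_mul_sq (range M) (fun _ => 1) c
    simpa using this
  have h4 : ∑ h ∈ range M, c h ^ 2 = (M:ℝ)^3 * G^4 := by
    have hg4 := gowers2_pow_four M hM0 a
    rw [← hG] at hg4
    have e2 : ∑ h ∈ range M, (c h / M) ^ (2:ℕ) = (∑ h ∈ range M, c h ^ 2) / (M:ℝ)^2 := by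
      rw [Finset.sum_div]
      exact Finset.sum_congr rfl fun h _ => by rw [div_pow]
    rw [e2] at hg4
    have hMne : (M:ℝ) ≠ 0 := Nat.cast_ne_zero.mpr (by omega)
    field_simp at hg4 ⊢
    linarith [hg4]
  have h5 : Complex.abs S ^ 4 ≤ ((M:ℝ) * G) ^ 4 := by
    have hsum : (0:ℝ) ≤ ∑ h ∈ range M, c h := Finset.sum_nonneg fun h _ => hcnn h
    calc Complex.abs S ^ 4 = (Complex.abs S ^ 2) ^ 2 := by ring
    _ ≤ (∑ h ∈ range M, c h) ^ 2 := by
        apply pow_le_pow_left₀ (by positivity) h2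
    _ ≤ (M:ℝ) * ((M:ℝ)^3 * G^4) := by rw [← h4]; exact h3
    _ = ((M:ℝ) * G) ^ 4 := by ring
  have habs : 0 ≤ Complex.abs S := AbsoluteValue.nonneg _ _
  have hMG : 0 ≤ (M:ℝ) * G := by positivity
  have h6 : Complex.abs S ≤ (M:ℝ) * G := le_of_pow_le_pow_left₀ (by norm_num) hMG h5
  have hcast : ((M:ℕ):ℝ) = 2*(N:ℝ) := by rw [hMdef]; push_cast; ring
  rw [hcast] at h6
  linarith
lemma pow_mod_eq {v : ℂ} {P : ℕ} (hv : v ^ P = 1) (a : ℕ) : v ^ (a % P) = v ^ a := by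
  conv_rhs => rw [← Nat.div_add_mod a P]
  rw [pow_add, pow_mul, hv, one_pow, one_mul]

lemma orth {P : ℕ} (hP : 0 < P) {ω : ℂ} (hω : IsPrimitiveRoot ω P)
    {m m' : ℕ} (hm : m < P) (hm' : m' < P) :
    ∑ ξ ∈ range P, (ω ^ m * (ω ^ m')⁻¹) ^ ξ = if m = m' then (P:ℂ) else 0 := by
  have hω0 : ω ≠ 0 := hω.ne_zero hP.ne'
  have hωP : ω ^ P = 1 := hω.pow_eq_one
  rcases eq_or_ne m m' with rfl | hne
  · rw [if_pos rfl, mul_inv_cancel₀ (pow_ne_zero _ hω0)]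
    simp
  · rw [if_neg hne]
    have hu1 : ω ^ m * (ω ^ m')⁻¹ ≠ 1 := by
      intro h
      exact hne (hω.pow_inj hm hm'
        ((mul_inv_eq_one₀ (pow_ne_zero _ hω0)).mp h))
    rw [geom_sum_eq hu1]
    have hP1 : (ω ^ m * (ω ^ m')⁻¹) ^ P = 1 := by
      rw [mul_pow, inv_pow, pow_right_comm, pow_right_comm ω m', hωP, one_pow, one_pow]
      simp
    rw [hP1]
    simp

lemma plancherel {P : ℕ} (hP : 0 < P) {ω : ℂ} (hω : IsPrimitiveRoot ω P)
    (habs : Complex.abs ω = 1) (g : ℕ → ℂ) :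
    ∑ ξ ∈ range P, Complex.abs (∑ m ∈ range P, g m * ω ^ (m * ξ)) ^ 2
      = P * ∑ m ∈ range P, Complex.abs (g m) ^ 2 := by
  have hkey : ∑ ξ ∈ range P, ((∑ m ∈ range P, g m * ω ^ (m * ξ)) *
      conj' (∑ m ∈ range P, g m * ω ^ (m * ξ)))
      = (P:ℂ) * ∑ m ∈ range P, g m * conj' (g m) := by
    have e1 : ∀ ξ ∈ range P, (∑ m ∈ range P, g m * ω ^ (m * ξ)) *
        conj' (∑ m ∈ range P, g m * ω ^ (m * ξ))
        = ∑ m ∈ range P, ∑ m' ∈ range P,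
            (g m * conj' (g m')) * ((ω ^ m * (ω ^ m')⁻¹) ^ ξ) := by
      intro ξ _
      rw [map_sum, Finset.sum_mul_sum]
      apply Finset.sum_congr rfl; intro m _
      apply Finset.sum_congr rfl; intro m' _
      rw [map_mul, map_pow, conj_eq_inv habs, inv_pow, mul_pow, inv_pow, ← pow_mul, ← pow_mul]
      ring
    rw [Finset.sum_congr rfl e1, Finset.sum_comm]
    have e2 : ∀ m ∈ range P, ∑ ξ ∈ range P, ∑ m' ∈ range P,
        (g m * conj' (g m')) * ((ω ^ m * (ω ^ m')⁻¹) ^ ξ)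
        = (P:ℂ) * (g m * conj' (g m)) := by
      intro m hm
      rw [Finset.sum_comm]
      have e3 : ∀ m' ∈ range P, ∑ ξ ∈ range P,
          (g m * conj' (g m')) * ((ω ^ m * (ω ^ m')⁻¹) ^ ξ)
          = (g m * conj' (g m')) * (if m = m' then (P:ℂ) else 0) := by
        intro m' hm'
        rw [← Finset.mul_sum, orth hP hω (mem_range.mp hm) (mem_range.mp hm')]
      rw [Finset.sum_congr rfl e3]
      rw [Finset.sum_eq_single m]
      · simp [mul_comm]
      · intro m' _ hne; simp [Ne.symm hne]
      · intro h; exact absurd hm h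
    rw [Finset.sum_congr rfl e2, ← Finset.mul_sum]
  have cast1 : ∀ w : ℂ, ((Complex.abs w : ℝ) : ℂ) ^ 2 = w * conj' w := by
    intro w
    rw [← Complex.ofReal_pow, Complex.mul_conj, Complex.sq_abs]
  have : ((∑ ξ ∈ range P, Complex.abs (∑ m ∈ range P, g m * ω ^ (m * ξ)) ^ 2 : ℝ) : ℂ)
      = (((P : ℝ) * ∑ m ∈ range P, Complex.abs (g m) ^ 2 : ℝ) : ℂ) := by
    push_cast
    rw [Finset.sum_congr rfl (fun ξ _ => cast1 _), hkey,
      Finset.sum_congr rfl (fun m _ => cast1 (g m))]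
  exact_mod_cast this
-- parseval_bound, to be appended after main.lean+d.lean contents
lemma parseval_bound (N : ℕ) (hN : 0 < N) (c φ : ℕ → ℂ) (K : ℝ)
    (hK : ∀ z : ℂ, Complex.abs z = 1 → Complex.abs (∑ n ∈ Icc 1 N, c n * z ^ n) ≤ K) :
    ∑ m ∈ Icc 1 N, Complex.abs (∑ n ∈ Icc 1 N, c n * φ (n + m)) ^ 2
      ≤ K ^ 2 * ∑ r ∈ Icc 2 (2*N), Complex.abs (φ r) ^ 2 := by
  set P := 4*N with hPdef
  have hP0 : 0 < P := by omega
  set ω : ℂ := Complex.exp (2 * Real.pi * Complex.I / P) with hω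
  have hprim : IsPrimitiveRoot ω P := Complex.isPrimitiveRoot_exp P (by omega)
  have habs : Complex.abs ω = 1 := by
    have : (2 * (Real.pi:ℂ) * Complex.I / P) = ((2 * Real.pi / P : ℝ) : ℂ) * Complex.I := by
      push_cast; ring
    rw [hω, this, Complex.abs_exp_ofReal_mul_I]
  have hωP : ω ^ P = 1 := hprim.pow_eq_one
  set c' : ℕ → ℂ := fun n => if n ∈ Icc 1 N then c n else 0 with hc'
  set ψ : ℕ → ℂ := fun r => if r ∈ Icc 2 (2*N) then φ r else 0 with hψ
  set D : ℕ → ℂ := fun m => ∑ n ∈ range P, c' n * ψ ((m + n) % P) with hD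
  -- (a)
  have ha : ∀ m ∈ Icc 1 N, D m = ∑ n ∈ Icc 1 N, c n * φ (n + m) := by
    intro m hm
    obtain ⟨hm1, hm2⟩ := mem_Icc.mp hm
    rw [hD]
    beta_reduce
    rw [← Finset.sum_subset (show Icc 1 N ⊆ range P by
        intro x hx; rw [mem_range]; have := (mem_Icc.mp hx).2; omega)]
    · apply Finset.sum_congr rfl
      intro n hn
      obtain ⟨hn1, hn2⟩ := mem_Icc.mp hn
      rw [hc']
      simp only [if_pos hn]
      rw [Nat.mod_eq_of_lt (by omega), hψ]
      simp only
      rw [if_pos (mem_Icc.mpr ⟨by omega, by omega⟩), add_comm m n]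
    · intro x _ hx
      rw [hc']
      simp only [if_neg hx, zero_mul]
  -- (conv)
  have hconv : ∀ ξ, ∑ m ∈ range P, D m * ω ^ (m * ξ)
      = (∑ n ∈ range P, c' n * ((ω ^ ξ)⁻¹) ^ n) * ∑ r ∈ range P, ψ r * ω ^ (r * ξ) := by
    intro ξ
    have hv : (ω ^ ξ) ^ P = 1 := by rw [← pow_mul, mul_comm, pow_mul, hωP, one_pow]
    have hvne : (ω ^ ξ) ≠ 0 := pow_ne_zero _ (hprim.ne_zero hP0.ne')
    have e0 : ∀ m ∈ range P, D m * ω ^ (m * ξ)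
        = ∑ n ∈ range P, c' n * (ψ ((m + n) % P) * (ω ^ ξ) ^ m) := by
      intro m _
      rw [hD, Finset.sum_mul]
      apply Finset.sum_congr rfl; intro n _
      rw [mul_comm m ξ, pow_mul]
      ring
    rw [Finset.sum_congr rfl e0, Finset.sum_comm]
    rw [Finset.sum_mul]
    apply Finset.sum_congr rfl
    intro n hn
    have key : ∑ m ∈ range P, ψ ((n + m) % P) * (ω ^ ξ) ^ m
        = ((ω ^ ξ) ^ n)⁻¹ * ∑ r ∈ range P, ψ r * (ω ^ ξ) ^ r := by
      rw [sum_shift_mod P hP0 n (mem_range.mp hn) (fun r => ψ r * (ω ^ ξ) ^ r)]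
      rw [Finset.mul_sum]
      apply Finset.sum_congr rfl
      intro h _
      rw [pow_mod_eq hv, pow_add]
      field_simp
    rw [← Finset.mul_sum]
    have e1 : ∑ x ∈ range P, ψ ((x + n) % P) * (ω ^ ξ) ^ x
        = ∑ x ∈ range P, ψ ((n + x) % P) * (ω ^ ξ) ^ x :=
      Finset.sum_congr rfl fun m _ => by rw [add_comm m n]
    rw [e1, key]
    have e2 : ∑ r ∈ range P, ψ r * ω ^ (r * ξ) = ∑ r ∈ range P, ψ r * (ω ^ ξ) ^ r :=
      Finset.sum_congr rfl fun r _ => by rw [mul_comm r ξ, pow_mul]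
    rw [e2, inv_pow]
    ring
  -- combine
  have hplD := plancherel hP0 hprim habs D
  have hplψ := plancherel hP0 hprim habs ψ
  have hKξ : ∀ ξ : ℕ, Complex.abs (∑ n ∈ range P, c' n * ((ω ^ ξ)⁻¹) ^ n) ≤ K := by
    intro ξ
    have habsw : Complex.abs ((ω ^ ξ)⁻¹) = 1 := by
      rw [map_inv₀, map_pow, habs, one_pow, inv_one]
    have : ∑ n ∈ range P, c' n * ((ω ^ ξ)⁻¹) ^ n = ∑ n ∈ Icc 1 N, c n * ((ω ^ ξ)⁻¹) ^ n := by
      rw [← Finset.sum_subset (show Icc 1 N ⊆ range P by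
          intro x hx; rw [mem_range]; have := (mem_Icc.mp hx).2; omega)]
      · exact Finset.sum_congr rfl fun n hn => by rw [hc']; simp only [if_pos hn]
      · intro x _ hx; rw [hc']; simp only [if_neg hx, zero_mul]
    rw [this]
    exact hK _ habsw
  have hK0 : 0 ≤ K := le_trans (AbsoluteValue.nonneg _ _) (hK 1 (by simp))
  have hmain : (P:ℝ) * ∑ m ∈ range P, Complex.abs (D m) ^ 2
      ≤ K ^ 2 * ((P:ℝ) * ∑ r ∈ range P, Complex.abs (ψ r) ^ 2) := by
    rw [← hplD, ← hplψ]
    rw [Finset.mul_sum]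
    apply Finset.sum_le_sum
    intro ξ _
    rw [hconv ξ, map_mul, mul_pow]
    apply mul_le_mul_of_nonneg_right _ (by positivity)
    exact pow_le_pow_left₀ (AbsoluteValue.nonneg _ _) (hKξ ξ) 2
  have hDsum : ∑ m ∈ range P, Complex.abs (D m) ^ 2
      ≤ K ^ 2 * ∑ r ∈ range P, Complex.abs (ψ r) ^ 2 := by
    have hPne : (0:ℝ) < (P:ℝ) := by exact_mod_cast hP0
    nlinarith [hmain]
  have hψsum : ∑ r ∈ range P, Complex.abs (ψ r) ^ 2
      = ∑ r ∈ Icc 2 (2*N), Complex.abs (φ r) ^ 2 := by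
    rw [← Finset.sum_subset (show Icc 2 (2*N) ⊆ range P by
        intro x hx; rw [mem_range]; have := (mem_Icc.mp hx).2; omega)]
    · exact Finset.sum_congr rfl fun r hr => by rw [hψ]; simp only [if_pos hr]
    · intro x _ hx; rw [hψ]; simp only [if_neg hx, map_zero]
      norm_num
  calc ∑ m ∈ Icc 1 N, Complex.abs (∑ n ∈ Icc 1 N, c n * φ (n + m)) ^ 2
      = ∑ m ∈ Icc 1 N, Complex.abs (D m) ^ 2 := by
        exact Finset.sum_congr rfl fun m hm => by rw [ha m hm]
    _ ≤ ∑ m ∈ range P, Complex.abs (D m) ^ 2 := by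
        apply Finset.sum_le_sum_of_subset_of_nonneg
        · intro x hx; rw [mem_range]; have := (mem_Icc.mp hx).2; omega
        · intro i _ _; positivity
    _ ≤ K ^ 2 * ∑ r ∈ range P, Complex.abs (ψ r) ^ 2 := hDsum
    _ = K ^ 2 * ∑ r ∈ Icc 2 (2*N), Complex.abs (φ r) ^ 2 := by rw [hψsum]
open MeasureTheory in
lemma ergodic_fourier_bound {X : Type} [MeasurableSpace X] (μ : Measure X) [IsProbabilityMeasure μ]
    (T : X → X) (hT : MeasurePreserving T μ μ) (F : X → ℂ) (hFm : Measurable F)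
    (hF1 : ∀ x, Complex.abs (F x) ≤ 1) (N : ℕ) (hN : 0 < N) (c : ℕ → ℂ) (K : ℝ)
    (hK : ∀ z : ℂ, Complex.abs z = 1 → Complex.abs (∑ n ∈ Icc 1 N, c n * z ^ n) ≤ K) :
    eLpNorm (fun x => ∑ n ∈ Icc 1 N, c n * F (T^[n] x)) 2 μ ≤ ENNReal.ofReal (2 * K) := by
  have hK0 : 0 ≤ K := le_trans (AbsoluteValue.nonneg _ _) (hK 1 (by simp))
  set S : ℕ → X → ℂ := fun m x => ∑ n ∈ Icc 1 N, c n * F (T^[n + m] x) with hSdef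
  have hSmeas : ∀ m, Measurable (S m) := by
    intro m
    apply Finset.measurable_sum
    intro n _
    exact ((hFm.comp ((hT.measurable).iterate (n + m)))).const_mul _
  have hS0 : (fun x => ∑ n ∈ Icc 1 N, c n * F (T^[n] x)) = S 0 := by
    funext x; simp [hSdef]
  set I : ℕ → ENNReal := fun m => ∫⁻ x, (‖S m x‖₊ : ENNReal) ^ (2:ℕ) ∂μ with hI
  have hImeas : ∀ m, Measurable fun x => (‖S m x‖₊ : ENNReal) ^ (2:ℕ) := by
    intro m
    exact ((hSmeas m).nnnorm.coe_nnreal_ennreal).pow_const _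
  have hIm : ∀ m, I m = I 0 := by
    intro m
    have hcomp : S m = fun x => S 0 (T^[m] x) := by
      funext x
      simp only [hSdef]
      apply Finset.sum_congr rfl
      intro n _
      rw [Nat.add_zero, Function.iterate_add_apply]
    rw [hI]
    simp only [hcomp]
    exact (hT.iterate m).lintegral_comp (hImeas 0)
  have hsum : (N : ENNReal) * I 0 = ∫⁻ x, ∑ m ∈ Icc 1 N, (‖S m x‖₊ : ENNReal) ^ (2:ℕ) ∂μ := by
    rw [lintegral_finset_sum _ (fun m _ => hImeas m)]
    rw [Finset.sum_congr rfl (fun m _ => hIm m)]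
    simp [Nat.card_Icc]
  have hpt : ∀ x, ∑ m ∈ Icc 1 N, (‖S m x‖₊ : ENNReal) ^ (2:ℕ) ≤ ENNReal.ofReal (K^2 * (2*N)) := by
    intro x
    have hpar := parseval_bound N hN c (fun r => F (T^[r] x)) K hK
    have h1 : ∑ m ∈ Icc 1 N, Complex.abs (S m x) ^ 2 ≤ K^2 * (2*N) := by
      have hb : ∑ r ∈ Icc 2 (2*N), Complex.abs (F (T^[r] x)) ^ 2 ≤ (2*N : ℝ) := by
        calc ∑ r ∈ Icc 2 (2*N), Complex.abs (F (T^[r] x)) ^ 2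
            ≤ ∑ _r ∈ Icc 2 (2*N), (1:ℝ) := by
              apply Finset.sum_le_sum
              intro r _
              have := hF1 (T^[r] x)
              nlinarith [AbsoluteValue.nonneg Complex.abs (F (T^[r] x))]
          _ ≤ (2*N : ℝ) := by
              have hcard : (Icc 2 (2*N)).card ≤ 2*N := by
                rw [Nat.card_Icc]; omega
              rw [Finset.sum_const, nsmul_eq_mul, mul_one]
              exact_mod_cast hcard
      exact le_trans hpar (mul_le_mul_of_nonneg_left hb (by positivity))
    have h2 : ∑ m ∈ Icc 1 N, (‖S m x‖₊ : ENNReal) ^ (2:ℕ)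
        = ENNReal.ofReal (∑ m ∈ Icc 1 N, Complex.abs (S m x) ^ 2) := by
      rw [ENNReal.ofReal_sum_of_nonneg (fun m _ => by positivity)]
      apply Finset.sum_congr rfl
      intro m _
      rw [← Complex.norm_eq_abs, ENNReal.ofReal_pow (norm_nonneg _), ofReal_norm, enorm_eq_nnnorm]
    rw [h2]
    exact ENNReal.ofReal_le_ofReal h1
  have hI0 : I 0 ≤ ENNReal.ofReal (2 * K^2) := by
    have hNe : (N : ENNReal) ≠ 0 := by exact_mod_cast hN.ne'
    have hNt : (N : ENNReal) ≠ ⊤ := ENNReal.natCast_ne_top N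
    rw [← ENNReal.mul_le_mul_iff_right hNe hNt]
    calc (N : ENNReal) * I 0 = ∫⁻ x, ∑ m ∈ Icc 1 N, (‖S m x‖₊ : ENNReal) ^ (2:ℕ) ∂μ := hsum
      _ ≤ ∫⁻ _, ENNReal.ofReal (K^2 * (2*N)) ∂μ := lintegral_mono hpt
      _ = ENNReal.ofReal (K^2 * (2*N)) := by
          rw [lintegral_const, measure_univ, mul_one]
      _ = (N : ENNReal) * ENNReal.ofReal (2 * K^2) := by
          rw [← ENNReal.ofReal_natCast N, ← ENNReal.ofReal_mul (by positivity)]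
          congr 1
          ring
  rw [hS0]
  rw [eLpNorm_eq_lintegral_rpow_enorm_toReal (p := 2) (by norm_num) (by norm_num)]
  simp only [enorm_eq_nnnorm]
  have htoReal : (2 : ENNReal).toReal = (2:ℝ) := by norm_num
  rw [htoReal]
  have hcongr : ∫⁻ x, (‖S 0 x‖₊ : ENNReal) ^ (2:ℝ) ∂μ = I 0 := by
    apply lintegral_congr
    intro x
    rw [← ENNReal.rpow_natCast]
    norm_num
  rw [hcongr]
  calc (I 0) ^ ((1:ℝ)/2) ≤ (ENNReal.ofReal (2 * K^2)) ^ ((1:ℝ)/2) := by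
        exact ENNReal.rpow_le_rpow hI0 (by norm_num)
    _ = ENNReal.ofReal ((2 * K^2) ^ ((1:ℝ)/2)) := by
        rw [ENNReal.ofReal_rpow_of_nonneg (by positivity) (by norm_num)]
    _ ≤ ENNReal.ofReal (2 * K) := by
        apply ENNReal.ofReal_le_ofReal
        have h4 : (2*K^2 : ℝ) ≤ ((2*K)^2 : ℝ) := by nlinarith
        calc (2 * K^2 : ℝ) ^ ((1:ℝ)/2) ≤ ((2*K)^2 : ℝ) ^ ((1:ℝ)/2) :=
              Real.rpow_le_rpow (by positivity) h4 (by norm_num)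
          _ = 2 * K := by
              rw [← Real.rpow_natCast (2*K) 2, ← Real.rpow_mul (by positivity)]
              norm_num

/-- Control of cube averages by the `U²` Gowers norm of any one of the weights:
for weights `b₁,…,b_k` of subexponential growth and average boundedly `≤ 1`, the
`L²(μ)` norm of the weighted cube average is bounded by
`C_k (‖b_j 1_{[1,N]}‖_{U²(ℤ_{2N})} + o_N(1))`, where `C_k` depends only on `k` and
the `o_N(1)` term depends only on the sequences `b₁,…,b_k`. -/
theorem cube_average_gowers_control (k : ℕ) (hk : 0 < k) :
    ∃ C : ℝ, 0 < C ∧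
    ∀ b : Fin k → ℕ → ℂ,
      (∀ i : Fin k, ∀ c : ℝ, 0 < c →
        Tendsto (fun n : ℕ => ‖b i n‖ / (n : ℝ) ^ c) atTop (nhds 0)) →
      (∀ i : Fin k, ∀ N : ℕ, 0 < N →
        (N : ℝ)⁻¹ * ∑ n ∈ Finset.Icc 1 N, ‖b i n‖ ≤ 1) →
      ∃ e : ℕ → ℝ, Tendsto e atTop (nhds 0) ∧
        ∀ (X : Type) (_ : MeasurableSpace X) (μ : Measure X), IsProbabilityMeasure μ →
          ∀ T : X → X, MeasurePreserving T μ μ → Function.Bijective T →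
            ∀ f : (Fin k → Bool) → X → ℂ,
              (∀ ε, Measurable (f ε)) → (∀ ε x, ‖f ε x‖ ≤ 1) →
              ∀ j : Fin k, ∀ N : ℕ, 0 < N →
                (eLpNorm (fun x =>
                    ((N : ℂ) ^ (k : ℕ))⁻¹ *
                      ∑ n ∈ Fintype.piFinset (fun _ : Fin k => Finset.Icc 1 N),
                        (∏ i : Fin k, b i (n i)) *
                          ∏ ε ∈ Finset.univ.filter
                              (fun ε : Fin k → Bool => ε ≠ fun _ => false),
                            f ε (T^[∑ i : Fin k, if ε i then n i else 0] x)) 2 μ).toReal ≤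
                  C * (gowersNormNat (2 * N) 2
                        (fun n => if 1 ≤ n ∧ n ≤ N then b j n else 0) + e N) := by
  refine ⟨4, by norm_num, ?_⟩
  intro b _hgrowth havg
  refine ⟨fun _ => 0, tendsto_const_nhds, ?_⟩
  intro X mX μ hμ T hT _hTbij f hfm hf1 j N hN
  -- abbreviations
  set a : ℕ → ℂ := fun n => if 1 ≤ n ∧ n ≤ N then b j n else 0 with hadef
  set G := gowersNormNat (2*N) 2 a with hGdef
  have hG0 : 0 ≤ G := gowers2_nonneg _ _
  set K : ℝ := (2*N : ℝ) * G with hKdef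
  have hK0 : 0 ≤ K := by positivity
  have hNR : (0:ℝ) < N := by exact_mod_cast hN
  have hK : ∀ z : ℂ, Complex.abs z = 1 → Complex.abs (∑ n ∈ Icc 1 N, b j n * z ^ n) ≤ K := by
    intro z hz
    have hsupp : ∀ n, a n ≠ 0 → 1 ≤ n ∧ n ≤ N := by
      intro n hn
      by_contra hcon
      exact hn (by rw [hadef]; simp only; rw [if_neg hcon])
    have hfg := fourier_le_gowers N hN a hsupp z hz
    have heq : ∑ n ∈ range (2*N), a n * z ^ n = ∑ n ∈ Icc 1 N, b j n * z ^ n := by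
      rw [← Finset.sum_subset (show Icc 1 N ⊆ range (2*N) by
          intro x hx; rw [mem_range]; have := (mem_Icc.mp hx).2; omega)]
      · apply Finset.sum_congr rfl
        intro n hn
        obtain ⟨h1, h2⟩ := mem_Icc.mp hn
        rw [hadef]; simp only; rw [if_pos ⟨h1, h2⟩]
      · intro x _ hxn
        rw [mem_Icc] at hxn
        rw [hadef]; simp only; rw [if_neg (by omega)]
        exact zero_mul _
    rw [heq] at hfg
    exact hfg
  -- cube structure
  set E : Finset (Fin k → Bool) := Finset.univ.filter (fun ε : Fin k → Bool => ε ≠ fun _ => false)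
    with hEdef
  set expo : (Fin k → Bool) → (Fin k → ℕ) → ℕ := fun ε n => ∑ i, if ε i then n i else 0
    with hexpodef
  set Gn : (Fin k → ℕ) → X → ℂ :=
    fun n x => (∏ i, b i (n i)) * ∏ ε ∈ E, f ε (T^[expo ε n] x) with hGndef
  set Pi1 := Fintype.piFinset (fun _ : Fin k => Icc 1 N) with hPi1
  set Pi2 := Fintype.piFinset (fun i : Fin k => if i = j then ({0} : Finset ℕ) else Icc 1 N)
    with hPi2
  have hPi2j : ∀ n' ∈ Pi2, n' j = 0 := by
    intro n' hn'
    have := (Fintype.mem_piFinset.mp hn') j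
    rw [if_pos rfl, Finset.mem_singleton] at this
    exact this
  set FF : (Fin k → ℕ) → X → ℂ :=
    fun n' y => ∏ ε ∈ E.filter (fun ε => ε j = true), f ε (T^[expo ε n'] y) with hFFdef
  set gg : (Fin k → ℕ) → X → ℂ :=
    fun n' x => ∏ ε ∈ E.filter (fun ε => ¬ (ε j = true)), f ε (T^[expo ε n'] x) with hggdef
  set Bc : (Fin k → ℕ) → ℂ := fun n' => ∏ i ∈ Finset.univ.erase j, b i (n' i) with hBcdef
  set SSg : (Fin k → ℕ) → X → ℂ :=
    fun n' x => (∑ t ∈ Icc 1 N, b j t * FF n' (T^[t] x)) * gg n' x with hSSgdef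
  -- exponent splitting
  have hexpo : ∀ (ε : Fin k → Bool) (n' : Fin k → ℕ), n' j = 0 → ∀ t,
      expo ε (Function.update n' j t) = (if ε j then t else 0) + expo ε n' := by
    intro ε n' hj0 t
    rw [hexpodef]
    simp only
    have h1 : ∀ m : Fin k → ℕ, ∑ i, (if ε i then m i else 0)
        = (if ε j then m j else 0) + ∑ i ∈ Finset.univ.erase j, (if ε i then m i else 0) :=
      fun m => (Finset.add_sum_erase _ _ (mem_univ j)).symm
    rw [h1, h1 n', hj0]
    have h2 : ∀ i ∈ Finset.univ.erase j,
        (if ε i then Function.update n' j t i else 0) = (if ε i then n' i else 0) := by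
      intro i hi
      rw [Function.update_of_ne (Finset.mem_erase.mp hi).1]
    rw [Finset.sum_congr rfl h2, Function.update_self]
    split <;> simp
  -- per-term splitting
  have hsplit : ∀ n' ∈ Pi2, ∀ t x,
      Gn (Function.update n' j t) x = Bc n' * (b j t * (FF n' (T^[t] x) * gg n' x)) := by
    intro n' hn' t x
    have hj0 := hPi2j n' hn'
    rw [hGndef]
    simp only
    have hb : ∏ i, b i (Function.update n' j t i)
        = b j t * ∏ i ∈ Finset.univ.erase j, b i (n' i) := by
      rw [← Finset.mul_prod_erase _ _ (mem_univ j), Function.update_self]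
      congr 1
      exact Finset.prod_congr rfl fun i hi => by
        rw [Function.update_of_ne (Finset.mem_erase.mp hi).1]
    have hprod : ∏ ε ∈ E, f ε (T^[expo ε (Function.update n' j t)] x)
        = FF n' (T^[t] x) * gg n' x := by
      rw [← Finset.prod_filter_mul_prod_filter_not E (fun ε => ε j = true)]
      congr 1
      · apply Finset.prod_congr rfl
        intro ε hε
        have hεj : ε j = true := (Finset.mem_filter.mp hε).2
        rw [hexpo ε n' hj0 t, if_pos hεj, add_comm, Function.iterate_add_apply]
      · apply Finset.prod_congr rfl
        intro ε hε
        have hεj : ¬ (ε j = true) := (Finset.mem_filter.mp hε).2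
        rw [hexpo ε n' hj0 t, if_neg hεj, zero_add]
    rw [hb, hprod]
    ring
  -- inner sum
  have hinner : ∀ n' ∈ Pi2, ∀ x,
      ∑ t ∈ Icc 1 N, Gn (Function.update n' j t) x = Bc n' * SSg n' x := by
    intro n' hn' x
    rw [Finset.sum_congr rfl (fun t _ => hsplit n' hn' t x), ← Finset.mul_sum]
    congr 1
    rw [hSSgdef]
    simp only
    rw [Finset.sum_mul]
    exact Finset.sum_congr rfl fun t _ => by ring
  -- swap
  have hswap : ∀ x, ∑ n ∈ Pi1, Gn n x
      = ∑ n' ∈ Pi2, ∑ t ∈ Icc 1 N, Gn (Function.update n' j t) x := by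
    intro x
    rw [← Finset.sum_product']
    apply Finset.sum_nbij' (i := fun n => ((Function.update n j 0, n j) : (Fin k → ℕ) × ℕ))
      (j := fun p => Function.update p.1 j p.2)
    · intro n hn
      rw [Finset.mem_product]
      constructor
      · show Function.update n j 0 ∈ Pi2
        rw [hPi2, Fintype.mem_piFinset]
        intro i
        by_cases hij : i = j
        · subst hij; rw [Function.update_self, if_pos rfl]; simp
        · rw [Function.update_of_ne hij, if_neg hij]
          exact (Fintype.mem_piFinset.mp hn) i
      · exact (Fintype.mem_piFinset.mp hn) j
    · rintro ⟨p1, p2⟩ hp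
      rw [Finset.mem_product] at hp
      show Function.update p1 j p2 ∈ Pi1
      rw [hPi1, Fintype.mem_piFinset]
      intro i
      by_cases hij : i = j
      · subst hij; rw [Function.update_self]; exact hp.2
      · rw [Function.update_of_ne hij]
        have := (Fintype.mem_piFinset.mp hp.1) i
        rwa [if_neg hij] at this
    · intro n _
      show Function.update (Function.update n j 0) j (n j) = n
      rw [Function.update_idem]
      exact Function.update_eq_self j n
    · rintro ⟨p1, p2⟩ hp
      rw [Finset.mem_product] at hp
      have hpj : p1 j = 0 := hPi2j p1 hp.1
      show (Function.update (Function.update p1 j p2) j 0, Function.update p1 j p2 j) = (p1, p2)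
      rw [Function.update_self, Function.update_idem]
      have h0 : Function.update p1 j 0 = p1 := by
        conv_lhs => rw [← hpj]
        exact Function.update_eq_self j p1
      rw [h0]
    · intro n _
      show Gn n x = Gn (Function.update (Function.update n j 0) j (n j)) x
      rw [Function.update_idem, Function.update_eq_self j n]
  -- function identity
  have hfun : (fun x => ((N : ℂ) ^ (k : ℕ))⁻¹ *
        ∑ n ∈ Pi1, (∏ i : Fin k, b i (n i)) *
          ∏ ε ∈ E, f ε (T^[expo ε n] x))
      = (((N : ℂ) ^ (k : ℕ))⁻¹) • (∑ n' ∈ Pi2, Bc n' • SSg n') := by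
    funext x
    rw [Pi.smul_apply, smul_eq_mul, Finset.sum_apply]
    have : ∑ n ∈ Pi1, (∏ i : Fin k, b i (n i)) * ∏ ε ∈ E, f ε (T^[expo ε n] x)
        = ∑ n ∈ Pi1, Gn n x := rfl
    rw [this, hswap x, Finset.sum_congr rfl (fun n' hn' => hinner n' hn' x)]
    congr 1
  -- measurability
  have hFFmeas : ∀ n', Measurable (FF n') := by
    intro n'
    apply Finset.measurable_prod
    intro ε _
    exact (hfm ε).comp (hT.measurable.iterate _)
  have hggmeas : ∀ n', Measurable (gg n') := by
    intro n'
    apply Finset.measurable_prod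
    intro ε _
    exact (hfm ε).comp (hT.measurable.iterate _)
  have hSSgmeas : ∀ n', Measurable (SSg n') := by
    intro n'
    apply Measurable.mul _ (hggmeas n')
    apply Finset.measurable_sum
    intro t _
    exact ((hFFmeas n').comp (hT.measurable.iterate _)).const_mul _
  have hFF1 : ∀ n' y, Complex.abs (FF n' y) ≤ 1 := by
    intro n' y
    rw [hFFdef]
    simp only
    rw [map_prod]
    apply Finset.prod_le_one (fun ε _ => norm_nonneg _) (fun ε _ => hf1 _ _)
  have hgg1 : ∀ n' x, Complex.abs (gg n' x) ≤ 1 := by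
    intro n' x
    rw [hggdef]
    simp only
    rw [map_prod]
    apply Finset.prod_le_one (fun ε _ => norm_nonneg _) (fun ε _ => hf1 _ _)
  -- per-term eLpNorm bound
  have hterm : ∀ n' ∈ Pi2, eLpNorm (SSg n') 2 μ ≤ ENNReal.ofReal (2 * K) := by
    intro n' _
    have hmono : ∀ x, ‖SSg n' x‖ ≤ ‖(fun y => ∑ t ∈ Icc 1 N, b j t * FF n' (T^[t] y)) x‖ := by
      intro x
      rw [hSSgdef]
      simp only [norm_mul]
      calc ‖∑ t ∈ Icc 1 N, b j t * FF n' (T^[t] x)‖ * ‖gg n' x‖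
          ≤ ‖∑ t ∈ Icc 1 N, b j t * FF n' (T^[t] x)‖ * 1 := by
            apply mul_le_mul_of_nonneg_left _ (norm_nonneg _)
            rw [Complex.norm_eq_abs]; exact hgg1 n' x
        _ = ‖∑ t ∈ Icc 1 N, b j t * FF n' (T^[t] x)‖ := mul_one _
    refine le_trans (eLpNorm_mono hmono) ?_
    exact ergodic_fourier_bound μ T hT (FF n') (hFFmeas n') (hFF1 n') N hN (b j) K hK
  -- Bc sum bound
  have hBc : ∑ n' ∈ Pi2, Complex.abs (Bc n') ≤ (N:ℝ)^(k-1) := by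
    have h1 : ∀ n' : Fin k → ℕ, Complex.abs (Bc n')
        = ∏ i, (if i = j then 1 else Complex.abs (b i (n' i))) := by
      intro n'
      rw [hBcdef]
      simp only
      rw [map_prod]
      rw [← Finset.mul_prod_erase _ (fun i => if i = j then 1 else Complex.abs (b i (n' i)))
        (mem_univ j), if_pos rfl, one_mul]
      exact Finset.prod_congr rfl fun i hi => by
        rw [if_neg (Finset.mem_erase.mp hi).1]
    rw [Finset.sum_congr rfl (fun n' _ => h1 n')]
    rw [hPi2, ← Finset.prod_univ_sum (fun i => if i = j then ({0}:Finset ℕ) else Icc 1 N)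
      (fun i t => if i = j then (1:ℝ) else Complex.abs (b i t))]
    have h2 : ∀ i : Fin k, ∑ t ∈ (if i = j then ({0}:Finset ℕ) else Icc 1 N),
        (if i = j then 1 else Complex.abs (b i t)) ≤ (if i = j then (1:ℝ) else N) := by
      intro i
      by_cases hij : i = j
      · simp [hij]
      · simp only [if_neg hij]
        have hS := havg i N hN
        have h3 : (N:ℝ) * ((N:ℝ)⁻¹ * ∑ t ∈ Icc 1 N, Complex.abs (b i t)) ≤ (N:ℝ) * 1 :=
          mul_le_mul_of_nonneg_left hS (le_of_lt hNR)
        rw [← mul_assoc, mul_inv_cancel₀ hNR.ne', one_mul, mul_one] at h3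
        exact h3
    calc ∏ i, ∑ t ∈ (if i = j then ({0}:Finset ℕ) else Icc 1 N),
          (if i = j then 1 else Complex.abs (b i t))
        ≤ ∏ i : Fin k, (if i = j then (1:ℝ) else N) := by
          apply Finset.prod_le_prod
          · intro i _
            apply Finset.sum_nonneg
            intro t _
            split <;> positivity
          · intro i _
            exact h2 i
      _ = (N:ℝ)^(k-1) := by
          rw [← Finset.mul_prod_erase _ _ (mem_univ j), if_pos rfl, one_mul]
          rw [Finset.prod_congr rfl (fun i hi => if_neg (Finset.mem_erase.mp hi).1),
            Finset.prod_const]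
          congr 1
          rw [Finset.card_erase_of_mem (mem_univ j), Finset.card_univ, Fintype.card_fin]
  -- main chain
  have hchain : eLpNorm (fun x => ((N : ℂ) ^ (k : ℕ))⁻¹ *
        ∑ n ∈ Pi1, (∏ i : Fin k, b i (n i)) *
          ∏ ε ∈ E, f ε (T^[expo ε n] x)) 2 μ ≤ ENNReal.ofReal (4 * G) := by
    rw [hfun, eLpNorm_const_smul]
    have hsum_le : eLpNorm (∑ n' ∈ Pi2, Bc n' • SSg n') 2 μ
        ≤ ∑ n' ∈ Pi2, (‖Bc n'‖₊ : ENNReal) * ENNReal.ofReal (2 * K) := by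
      refine le_trans (eLpNorm_sum_le (fun n' _ =>
        ((hSSgmeas n').const_smul (Bc n')).aestronglyMeasurable) (by norm_num)) ?_
      apply Finset.sum_le_sum
      intro n' hn'
      rw [eLpNorm_const_smul]
      exact mul_le_mul_right (hterm n' hn') _
    have hsum2 : ∑ n' ∈ Pi2, (‖Bc n'‖₊ : ENNReal) * ENNReal.ofReal (2 * K)
        ≤ ENNReal.ofReal ((N:ℝ)^(k-1)) * ENNReal.ofReal (2 * K) := by
      rw [← Finset.sum_mul]
      apply mul_le_mul_left
      have : ∑ n' ∈ Pi2, (‖Bc n'‖₊ : ENNReal)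
          = ENNReal.ofReal (∑ n' ∈ Pi2, Complex.abs (Bc n')) := by
        rw [ENNReal.ofReal_sum_of_nonneg (fun n' _ => AbsoluteValue.nonneg _ _)]
        exact Finset.sum_congr rfl fun n' _ => by
          rw [← Complex.norm_eq_abs, ofReal_norm, enorm_eq_nnnorm]
      rw [this]
      exact ENNReal.ofReal_le_ofReal hBc
    have hnorm : (‖((N : ℂ) ^ (k : ℕ))⁻¹‖₊ : ENNReal) = ENNReal.ofReal (((N:ℝ)^(k:ℕ))⁻¹) := by
      rw [← enorm_eq_nnnorm, ← ofReal_norm]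
      congr 1
      rw [norm_inv, norm_pow, Complex.norm_natCast]
    calc (‖((N : ℂ) ^ (k : ℕ))⁻¹‖₊ : ENNReal) * eLpNorm (∑ n' ∈ Pi2, Bc n' • SSg n') 2 μ
        ≤ (‖((N : ℂ) ^ (k : ℕ))⁻¹‖₊ : ENNReal) *
            (ENNReal.ofReal ((N:ℝ)^(k-1)) * ENNReal.ofReal (2 * K)) :=
          mul_le_mul_right (le_trans hsum_le hsum2) _
      _ = ENNReal.ofReal ((((N:ℝ)^(k:ℕ))⁻¹) * ((N:ℝ)^(k-1) * (2 * K))) := by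
          rw [hnorm, ← ENNReal.ofReal_mul (by positivity), ← ENNReal.ofReal_mul (by positivity)]
      _ = ENNReal.ofReal (4 * G) := by
          congr 1
          have hNk : (N:ℝ)^(k:ℕ) = (N:ℝ)^(k-1) * N := by
            rw [← pow_succ]
            congr 1
            omega
          rw [hKdef, hNk]
          field_simp
          ring
  have hfinal := ENNReal.toReal_le_of_le_ofReal (by positivity) hchain
  calc (eLpNorm (fun x => ((N : ℂ) ^ (k : ℕ))⁻¹ *
        ∑ n ∈ Pi1, (∏ i : Fin k, b i (n i)) *
          ∏ ε ∈ E, f ε (T^[expo ε n] x)) 2 μ).toReal ≤ 4 * G := hfinal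
    _ = 4 * (G + 0) := by ring
end
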